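/- arXiv:2009.03418 — 3 statements merged into one kernel-verified Lean document; each statement's English description precedes it below -/
import Mathlib

section
/- Let k ≥ 3, let P ⊆ S² be a set of k points in general position with P̂ = P ∪ (−P), and let P' ⊆ P with t = k − |P'|. Suppose for each p ∈ P' a half-circle H_p with endpoints p and −p is chosen so that the great circle of each H_p meets P̂ only in {p, −p}, and let s be the number of unordered pairs {p, p'} ⊆ P' of distinct points with H_p ∩ H_{p'} ≠ ∅. Then the total number of crossing pairs among the curves arc(a,b) (for all edges {a,b} of P̂) together with the half-circles H_p (p ∈ P') equals H(2k) − (1/2)·t·(k−1)(k−2) + s. -/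
open Set
open scoped RealInnerProductSpace

noncomputable section

/-- Three-dimensional Euclidean space. -/
abbrev E3 : Type := EuclideanSpace ℝ (Fin 3)

/-- The unit sphere `S²` in `ℝ³`. -/
def unitSphere : Set E3 := {x | ‖x‖ = 1}

/-- The geodesic arc from `p` to `q`: the radial projection onto the sphere of the
straight segment from `p` to `q`. -/
def arc (p q : E3) : Set E3 :=
  {x | ∃ t ∈ Icc (0 : ℝ) 1, x = ‖(1 - t) • p + t • q‖⁻¹ • ((1 - t) • p + t • q)}

/-- The half-circle with endpoints `p` and `-p` determined by a direction `v`. -/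
def halfCircle (p v : E3) : Set E3 :=
  {x | ∃ t ∈ Icc (0 : ℝ) Real.pi, x = Real.cos t • p + Real.sin t • v}

/-- A set of points is in general position if every three distinct points of it are
linearly independent. -/
def GenPos (P : Set E3) : Prop :=
  ∀ a ∈ P, ∀ b ∈ P, ∀ c ∈ P, a ≠ b → a ≠ c → b ≠ c → LinearIndependent ℝ ![a, b, c]

/-- `P̂ = P ∪ (-P)`: the set `P` together with the antipodes of its points. -/
def phat (P : Set E3) : Set E3 := P ∪ (fun x => -x) '' P

/-- The edges of a vertex set `V`: unordered pairs `{a, b}` of points of `V`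
with `b ∉ {a, -a}`. -/
def edges (V : Set E3) : Set (Sym2 E3) :=
  {e | ∃ a b, a ∈ V ∧ b ∈ V ∧ b ≠ a ∧ b ≠ -a ∧ e = s(a, b)}

/-- A curve of a drawing: a subset of the sphere together with its set of endpoints. -/
abbrev Curve : Type := Set E3 × Set E3

/-- The curves of the drawing determined by `P`: the geodesic arcs `arc a b` for all
edges `{a, b}` of `P̂`, together with the half-circles `halfCircle p (v p)` joining
`p` and `-p` for `p ∈ P'`. -/
def drawingCurves (P : Set E3) (v : E3 → E3) (P' : Set E3) : Set Curve :=
  {c | (∃ a b, a ∈ phat P ∧ b ∈ phat P ∧ b ≠ a ∧ b ≠ -a ∧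
          c = (arc a b, ({a, b} : Set E3))) ∨
       (∃ p ∈ P', c = (halfCircle p (v p), ({p, -p} : Set E3)))}

/-- The crossing pairs of a drawing: unordered pairs of distinct curves sharing a point
that is not an endpoint of either curve. -/
def crossingPairs (D : Set Curve) : Set (Sym2 Curve) :=
  {pr | ∃ c ∈ D, ∃ d ∈ D, c ≠ d ∧
    (∃ x, x ∈ c.1 ∧ x ∈ d.1 ∧ x ∉ c.2 ∧ x ∉ d.2) ∧ pr = s(c, d)}

/-- Hill's number `H(n)` as a rational number. -/
def Hfun (n : ℕ) : ℚ :=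
  (1 / 4 : ℚ) * ((n / 2 : ℕ) : ℚ) * (((n - 1) / 2 : ℕ) : ℚ) *
    (((n - 2) / 2 : ℕ) : ℚ) * (((n - 3) / 2 : ℕ) : ℚ)


section Helpers
variable {α β : Type*}

lemma two_to_one [DecidableEq β] (W : Finset α) (f : α → β) (σ : α → α)
    (hmem : ∀ a ∈ W, σ a ∈ W) (hne : ∀ a ∈ W, σ a ≠ a) (hf : ∀ a ∈ W, f (σ a) = f a)
    (hker : ∀ a ∈ W, ∀ b ∈ W, f b = f a → b = a ∨ b = σ a) :
    (W.image f).card * 2 = W.card := by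
  classical
  rw [Finset.card_eq_sum_card_fiberwise (fun x hx => Finset.mem_image_of_mem f hx)]
  rw [Finset.sum_congr rfl (g := fun _ => 2) ?_, Finset.sum_const, smul_eq_mul]
  intro b hb
  obtain ⟨a, haW, rfl⟩ := Finset.mem_image.1 hb
  have hfil : W.filter (fun x => f x = f a) = {a, σ a} := by
    ext x
    simp only [Finset.mem_filter, Finset.mem_insert, Finset.mem_singleton]
    constructor
    · rintro ⟨hxW, hfx⟩; exact hker a haW x hxW hfx
    · rintro (rfl | rfl)
      · exact ⟨haW, rfl⟩
      · exact ⟨hmem a haW, hf a haW⟩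
  rw [hfil, Finset.card_insert_of_notMem (by simpa using (hne a haW).symm),
    Finset.card_singleton]

end Helpers

section Geom

lemma unit_smul_unit {x a : E3} {c : ℝ} (hx : ‖x‖ = 1) (ha : ‖a‖ = 1) (h : x = c • a) :
    x = a ∨ x = -a := by
  have hc : |c| = 1 := by
    have := congrArg norm h
    rw [norm_smul, Real.norm_eq_abs, ha, mul_one, hx] at this
    exact this.symm
  rcases abs_eq (by norm_num : (0:ℝ) ≤ 1) |>.1 hc with rfl | rfl
  · left; rw [h, one_smul]
  · right; rw [h, neg_one_smul]

lemma unit_smul_unit_nonneg {x a : E3} {c : ℝ} (hx : ‖x‖ = 1) (ha : ‖a‖ = 1)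
    (hc : 0 ≤ c) (h : x = c • a) : x = a := by
  rcases unit_smul_unit hx ha h with h1 | h1
  · exact h1
  · exfalso
    have : c • a = -a := h ▸ h1
    have h2 : (c + 1) • a = 0 := by rw [add_smul, one_smul, this]; abel
    have ha0 : a ≠ 0 := fun h0 => by simp [h0] at ha
    have := smul_eq_zero.1 h2
    rcases this with h3 | h3
    · linarith
    · exact ha0 h3

lemma coords_unique {a b : E3} (h : LinearIndependent ℝ ![a, b]) {α β γ δ : ℝ}
    (he : α • a + β • b = γ • a + δ • b) : α = γ ∧ β = δ := by
  have h0 : (α - γ) • a + (β - δ) • b = 0 := by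
    rw [sub_smul, sub_smul]; rw [sub_add_sub_comm, sub_eq_zero]; exact he
  have := Fintype.linearIndependent_iff.1 h ![α - γ, β - δ]
    (by simpa [Fin.sum_univ_two] using h0)
  constructor
  · have := this 0; simpa [sub_eq_zero] using this
  · have := this 1; simpa [sub_eq_zero] using this

lemma not_mem_span_pair {x y z : E3} (h : LinearIndependent ℝ ![x, y, z]) :
    x ∉ Submodule.span ℝ ({y, z} : Set E3) := by
  intro hx
  obtain ⟨γ, δ, hgd⟩ := Submodule.mem_span_pair.1 hx
  have h0 : (1:ℝ) • x + (-γ) • y + (-δ) • z = 0 := by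
    rw [one_smul, neg_smul, neg_smul]
    rw [← hgd]; abel
  have := Fintype.linearIndependent_iff.1 h ![1, -γ, -δ]
    (by simpa [Fin.sum_univ_three, add_assoc] using h0)
  simpa using this 0

lemma li_smul_signs {ι : Type*} [Fintype ι] {f : ι → E3} (h : LinearIndependent ℝ f)
    (ε : ι → ℝ) (hε : ∀ i, ε i ≠ 0) : LinearIndependent ℝ (fun i => ε i • f i) := by
  rw [Fintype.linearIndependent_iff] at h ⊢
  intro g hg i
  have := h (fun i => g i * ε i) (by simpa [mul_smul] using hg)
  have := this i
  exact (mul_eq_zero.1 this).resolve_right (hε i)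

lemma li3_signs {A B C : E3} (h : LinearIndependent ℝ ![A, B, C]) (ε₁ ε₂ ε₃ : ℝ)
    (h1 : ε₁ ≠ 0) (h2 : ε₂ ≠ 0) (h3 : ε₃ ≠ 0) :
    LinearIndependent ℝ ![ε₁ • A, ε₂ • B, ε₃ • C] := by
  have key := li_smul_signs h ![ε₁, ε₂, ε₃] (by
    intro i; fin_cases i <;> simpa)
  convert key using 1
  funext i; fin_cases i <;> simp

lemma li3_neg1 {A B C : E3} (h : LinearIndependent ℝ ![A, B, C]) :
    LinearIndependent ℝ ![-A, B, C] := by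
  have := li3_signs h (-1) 1 1 (by norm_num) one_ne_zero one_ne_zero
  simpa using this

lemma li3_neg2 {A B C : E3} (h : LinearIndependent ℝ ![A, B, C]) :
    LinearIndependent ℝ ![A, -B, C] := by
  have := li3_signs h 1 (-1) 1 one_ne_zero (by norm_num) one_ne_zero
  simpa using this

lemma li3_neg3 {A B C : E3} (h : LinearIndependent ℝ ![A, B, C]) :
    LinearIndependent ℝ ![A, B, -C] := by
  have := li3_signs h 1 1 (-1) one_ne_zero one_ne_zero (by norm_num)
  simpa using this

lemma li3_of_signs {A B C a b c : E3} (hA : a = A ∨ a = -A) (hB : b = B ∨ b = -B)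
    (hC : c = C ∨ c = -C) (h : LinearIndependent ℝ ![A, B, C]) :
    LinearIndependent ℝ ![a, b, c] := by
  rcases hA with rfl | rfl <;> rcases hB with rfl | rfl <;> rcases hC with rfl | rfl
  · exact h
  · exact li3_neg3 h
  · exact li3_neg2 h
  · exact li3_neg3 (li3_neg2 h)
  · exact li3_neg1 h
  · exact li3_neg3 (li3_neg1 h)
  · exact li3_neg2 (li3_neg1 h)
  · exact li3_neg3 (li3_neg2 (li3_neg1 h))

lemma li2_of_units {a b : E3} (ha : ‖a‖ = 1) (hb : ‖b‖ = 1) (h1 : b ≠ a) (h2 : b ≠ -a) :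
    LinearIndependent ℝ ![a, b] := by
  refine linearIndependent_fin2.2 ⟨?_, ?_⟩
  · simp only [Matrix.cons_val_one, Matrix.head_cons, Matrix.cons_val_zero]
    intro h0; rw [h0] at hb; simp at hb
  · intro c hc
    simp only [Matrix.cons_val_one, Matrix.head_cons, Matrix.cons_val_zero] at hc
    rcases unit_smul_unit ha hb hc.symm with h3 | h3
    · exact h1 h3.symm
    · exact h2 (by rw [← neg_neg b, ← h3])

end Geom

lemma mem_arc_iff {a b x : E3} (h : LinearIndependent ℝ ![a, b]) :
    x ∈ arc a b ↔ ‖x‖ = 1 ∧ ∃ α β : ℝ, 0 ≤ α ∧ 0 ≤ β ∧ x = α • a + β • b := by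
  have key : ∀ s t : ℝ, ¬(s = 0 ∧ t = 0) → s • a + t • b ≠ 0 := by
    intro s t hst h0
    have := Fintype.linearIndependent_iff.1 h ![s, t]
      (by simpa [Fin.sum_univ_two] using h0)
    exact hst ⟨this 0, this 1⟩
  constructor
  · rintro ⟨t, ⟨ht0, ht1⟩, rfl⟩
    have hnz : (1 - t) • a + t • b ≠ 0 := key _ _ (by rintro ⟨h1, h2⟩; rw [h2] at h1; norm_num at h1)
    have hN : (0:ℝ) < ‖(1 - t) • a + t • b‖ := norm_pos_iff.2 hnz
    refine ⟨?_, ‖(1 - t) • a + t • b‖⁻¹ * (1 - t), ‖(1 - t) • a + t • b‖⁻¹ * t,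
      mul_nonneg (inv_nonneg.2 (norm_nonneg _)) (by linarith),
      mul_nonneg (inv_nonneg.2 (norm_nonneg _)) ht0, ?_⟩
    · rw [norm_smul, Real.norm_eq_abs, abs_inv, abs_of_pos hN, inv_mul_cancel₀ hN.ne']
    · rw [smul_add, smul_smul, smul_smul]
  · rintro ⟨hx, α, β, hα, hβ, rfl⟩
    have hab : ¬(α = 0 ∧ β = 0) := by
      rintro ⟨rfl, rfl⟩; simp at hx
    have hs : 0 < α + β := by
      rcases lt_or_eq_of_le hα with h1 | h1
      · linarith
      · rcases lt_or_eq_of_le hβ with h2 | h2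
        · linarith
        · exact absurd ⟨h1.symm, h2.symm⟩ hab
    refine ⟨β / (α + β), ⟨by positivity, by rw [div_le_one hs]; linarith⟩, ?_⟩
    have hrepr : (1 - β / (α + β)) • a + (β / (α + β)) • b
        = (α + β)⁻¹ • (α • a + β • b) := by
      rw [smul_add, smul_smul, smul_smul]
      congr 2
      · field_simp; ring
      · field_simp
    rw [hrepr, norm_smul, Real.norm_eq_abs, abs_inv, abs_of_pos hs, hx, mul_one,
      inv_inv, smul_smul, mul_inv_cancel₀ hs.ne', one_smul]

lemma arc_comm (a b : E3) : arc a b = arc b a := by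
  have key : ∀ x a b : E3, x ∈ arc a b → x ∈ arc b a := by
    intro x a b ⟨t, ⟨ht0, ht1⟩, hx⟩
    refine ⟨1 - t, ⟨by linarith, by linarith⟩, ?_⟩
    have : (1 - (1 - t)) • b + (1 - t) • a = (1 - t) • a + t • b := by
      ring_nf; rw [add_comm]
    rw [this]; exact hx
  ext x; exact ⟨key x a b, key x b a⟩

lemma neg_mem_arc_neg {a b x : E3} (hx : x ∈ arc a b) : -x ∈ arc (-a) (-b) := by
  obtain ⟨t, ht, rfl⟩ := hx
  refine ⟨t, ht, ?_⟩
  have h1 : (1 - t) • (-a) + t • (-b) = -((1 - t) • a + t • b) := by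
    rw [smul_neg, smul_neg]; abel
  rw [h1, norm_neg, smul_neg]

lemma arc_subset_span {a b x : E3} (hx : x ∈ arc a b) :
    x ∈ Submodule.span ℝ ({a, b} : Set E3) := by
  obtain ⟨t, _, rfl⟩ := hx
  refine Submodule.mem_span_pair.2 ⟨‖(1 - t) • a + t • b‖⁻¹ * (1 - t),
    ‖(1 - t) • a + t • b‖⁻¹ * t, ?_⟩
  rw [smul_add, smul_smul, smul_smul]

lemma norm_sq_combo {p w : E3} {α β : ℝ} (hp : ‖p‖ = 1) (hw : ‖w‖ = 1)
    (hpw : ⟪p, w⟫ = 0) : ‖α • p + β • w‖ ^ 2 = α ^ 2 + β ^ 2 := by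
  rw [norm_add_sq_real, norm_smul, norm_smul, real_inner_smul_left, real_inner_smul_right,
    hpw, Real.norm_eq_abs, Real.norm_eq_abs, hp, hw]
  rw [mul_one, mul_one, sq_abs, sq_abs]
  ring

lemma mem_halfCircle_iff {p w x : E3} (hp : ‖p‖ = 1) (hw : ‖w‖ = 1) (hpw : ⟪p, w⟫ = 0) :
    x ∈ halfCircle p w ↔ ∃ α β : ℝ, α ^ 2 + β ^ 2 = 1 ∧ 0 ≤ β ∧ x = α • p + β • w := by
  constructor
  · rintro ⟨t, ⟨ht0, ht1⟩, rfl⟩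
    exact ⟨Real.cos t, Real.sin t, by rw [add_comm]; exact Real.sin_sq_add_cos_sq t,
      Real.sin_nonneg_of_nonneg_of_le_pi ht0 ht1, rfl⟩
  · rintro ⟨α, β, h1, hβ, rfl⟩
    have hα1 : -1 ≤ α := by nlinarith
    have hα2 : α ≤ 1 := by nlinarith
    refine ⟨Real.arccos α, ⟨Real.arccos_nonneg α, Real.arccos_le_pi α⟩, ?_⟩
    rw [Real.cos_arccos hα1 hα2, Real.sin_arccos]
    congr 1
    have : 1 - α ^ 2 = β ^ 2 := by linarith
    rw [this, Real.sqrt_sq_eq_abs, abs_of_nonneg hβ]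

lemma halfCircle_unit {p w x : E3} (hp : ‖p‖ = 1) (hw : ‖w‖ = 1) (hpw : ⟪p, w⟫ = 0)
    (hx : x ∈ halfCircle p w) : ‖x‖ = 1 := by
  obtain ⟨α, β, h1, _, rfl⟩ := (mem_halfCircle_iff hp hw hpw).1 hx
  have h2 : ‖α • p + β • w‖ ^ 2 = 1 := by rw [norm_sq_combo hp hw hpw]; exact h1
  have := congrArg Real.sqrt h2
  rwa [Real.sqrt_sq (norm_nonneg _), Real.sqrt_one] at this

lemma halfCircle_subset_span {p w x : E3} (hx : x ∈ halfCircle p w) :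
    x ∈ Submodule.span ℝ ({p, w} : Set E3) := by
  obtain ⟨t, _, rfl⟩ := hx
  exact Submodule.mem_span_pair.2 ⟨Real.cos t, Real.sin t, rfl⟩

lemma li2_orthonormal {p w : E3} (hp : ‖p‖ = 1) (hw : ‖w‖ = 1) (hpw : ⟪p, w⟫ = 0) :
    LinearIndependent ℝ ![p, w] := by
  refine linearIndependent_fin2.2 ⟨?_, ?_⟩
  · simp only [Matrix.cons_val_one, Matrix.head_cons, Matrix.cons_val_zero]
    intro h0; rw [h0] at hw; simp at hw
  · intro c hc
    simp only [Matrix.cons_val_one, Matrix.head_cons, Matrix.cons_val_zero] at hc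
    have : ⟪p, c • w⟫ = ⟪p, p⟫ := by rw [hc]
    rw [real_inner_smul_right, hpw, mul_zero, real_inner_self_eq_norm_sq, hp] at this
    norm_num at this

/-- Two distinct 2-dim planes in E3 meet the unit sphere in an antipodal pair. -/
lemma planes_sphere_inter {a b c d : E3} (hab : LinearIndependent ℝ ![a, b])
    (hcd : LinearIndependent ℝ ![c, d])
    (hne : Submodule.span ℝ ({a, b} : Set E3) ≠ Submodule.span ℝ ({c, d} : Set E3)) :
    ∃ x : E3, ‖x‖ = 1 ∧ x ∈ Submodule.span ℝ ({a, b} : Set E3) ∧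
      x ∈ Submodule.span ℝ ({c, d} : Set E3) ∧
      ∀ y : E3, ‖y‖ = 1 → y ∈ Submodule.span ℝ ({a, b} : Set E3) →
        y ∈ Submodule.span ℝ ({c, d} : Set E3) → y = x ∨ y = -x := by
  classical
  set U := Submodule.span ℝ ({a, b} : Set E3) with hU
  set W := Submodule.span ℝ ({c, d} : Set E3) with hW
  have hrange : ∀ u v : E3, Set.range ![u, v] = {u, v} := by
    intro u v; ext z
    simp only [Set.mem_range, Fin.exists_fin_two, Set.mem_insert_iff, Set.mem_singleton_iff]
    simp [eq_comm]
  have hUr : Module.finrank ℝ U = 2 := by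
    rw [hU, ← hrange a b]
    simpa using finrank_span_eq_card hab
  have hWr : Module.finrank ℝ W = 2 := by
    rw [hW, ← hrange c d]
    simpa using finrank_span_eq_card hcd
  have htop : Module.finrank ℝ (U ⊔ W : Submodule ℝ E3) ≤ 3 := by
    have := Submodule.finrank_le (U ⊔ W)
    simpa [finrank_euclideanSpace] using this
  have hG := Submodule.finrank_sup_add_finrank_inf_eq U W
  have hinf_le : Module.finrank ℝ (U ⊓ W : Submodule ℝ E3) ≤ 2 := by
    have := Submodule.finrank_mono (inf_le_left : U ⊓ W ≤ U)
    omega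
  have hinf_ne : Module.finrank ℝ (U ⊓ W : Submodule ℝ E3) ≠ 2 := by
    intro h2
    have h3 : U ⊓ W = U := Submodule.eq_of_le_of_finrank_le inf_le_left (by omega)
    have h4 : U ≤ W := by rw [← h3]; exact inf_le_right
    exact hne (Submodule.eq_of_le_of_finrank_le h4 (by omega))
  have hinf : Module.finrank ℝ (U ⊓ W : Submodule ℝ E3) = 1 := by omega
  obtain ⟨⟨g, hgUW⟩, hg0, hgen⟩ := finrank_eq_one_iff'.1 hinf
  have hgne : g ≠ 0 := by
    intro h0
    exact hg0 (by apply Subtype.ext; simpa using h0)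
  have hgnorm : (0:ℝ) < ‖g‖ := norm_pos_iff.2 hgne
  refine ⟨‖g‖⁻¹ • g, ?_, ?_, ?_, ?_⟩
  · rw [norm_smul, Real.norm_eq_abs, abs_inv, abs_of_pos hgnorm, inv_mul_cancel₀ hgnorm.ne']
  · exact Submodule.smul_mem _ _ (hgUW.1)
  · exact Submodule.smul_mem _ _ (hgUW.2)
  · intro y hy hyU hyW
    obtain ⟨cc, hcc⟩ := hgen ⟨y, hyU, hyW⟩
    have hyg : y = cc • g := by
      have := congrArg (Subtype.val) hcc
      exact this.symm
    have hxnorm : ‖‖g‖⁻¹ • g‖ = 1 := by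
      rw [norm_smul, Real.norm_eq_abs, abs_inv, abs_of_pos hgnorm, inv_mul_cancel₀ hgnorm.ne']
    have : y = (cc * ‖g‖) • (‖g‖⁻¹ • g) := by
      rw [smul_smul, mul_assoc, mul_inv_cancel₀ hgnorm.ne', mul_one, hyg]
    exact unit_smul_unit hy hxnorm this

section PartB
open Classical in
/-- The class representative in `P` of a point of `phat P`. -/
def clP (P : Set E3) (y : E3) : E3 := if y ∈ P then y else -y

def curveA (a b : E3) : Curve := (arc a b, ({a, b} : Set E3))

def curveHC (v : E3 → E3) (p : E3) : Curve := (halfCircle p (v p), ({p, -p} : Set E3))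

structure Good (k : ℕ) (P P' : Set E3) (v : E3 → E3) : Prop where
  hk : 3 ≤ k
  hP' : P' ⊆ P
  hPS : P ⊆ unitSphere
  hPfin : P.Finite
  hcard : P.ncard = k
  hgen : GenPos P
  hv : ∀ p ∈ P', ‖v p‖ = 1 ∧ ⟪p, v p⟫ = 0
  hgc : ∀ p ∈ P', ((Submodule.span ℝ {p, v p} : Set E3) ∩ unitSphere) ∩ phat P =
      ({p, -p} : Set E3)

lemma unit_ne_neg {p : E3} (hp : ‖p‖ = 1) : p ≠ -p := by
  intro h
  have : (2:ℝ) • p = 0 := by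
    have : p + p = 0 := by nth_rewrite 2 [h]; abel
    rw [two_smul]; exact this
  have hp0 : p = 0 := by
    rcases smul_eq_zero.1 this with h2 | h2
    · norm_num at h2
    · exact h2
  rw [hp0] at hp; simp at hp

namespace Good

variable {k : ℕ} {P P' : Set E3} {v : E3 → E3} (C : Good k P P' v)
include C

lemma unitP {p : E3} (hp : p ∈ P) : ‖p‖ = 1 := C.hPS hp

lemma no_antip {p : E3} (hp : p ∈ P) : -p ∉ P := by
  intro hnp
  have hpn : p ≠ -p := unit_ne_neg (C.unitP hp)
  -- find a third point
  have h2 : ({p, -p} : Set E3).ncard = 2 := by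
    rw [Set.ncard_pair hpn]
  have hPn : ¬ P ⊆ ({p, -p} : Set E3) := by
    intro hsub
    have := Set.ncard_le_ncard hsub ((Set.finite_singleton (-p)).insert p)
    rw [h2, C.hcard] at this
    have hk3 := C.hk
    omega
  obtain ⟨r, hrP, hr⟩ := Set.not_subset.1 hPn
  simp only [Set.mem_insert_iff, Set.mem_singleton_iff, not_or] at hr
  have hli := C.hgen p hp (-p) hnp r hrP hpn (Ne.symm hr.1) (Ne.symm hr.2)
  have h0 : (1:ℝ) • p + (1:ℝ) • (-p) + (0:ℝ) • r = 0 := by simp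
  have := Fintype.linearIndependent_iff.1 hli ![1, 1, 0]
    (by simpa [Fin.sum_univ_three] using h0)
  simpa using this 0

lemma mem_phat_iff {y : E3} : y ∈ phat P ↔ y ∈ P ∨ -y ∈ P := by
  unfold phat
  simp only [Set.mem_union, Set.mem_image]
  constructor
  · rintro (h | ⟨x, hx, rfl⟩)
    · exact Or.inl h
    · right; rwa [neg_neg]
  · rintro (h | h)
    · exact Or.inl h
    · exact Or.inr ⟨-y, h, by rw [neg_neg]⟩

lemma phat_unit {y : E3} (hy : y ∈ phat P) : ‖y‖ = 1 := by
  rcases C.mem_phat_iff.1 hy with h | h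
  · exact C.unitP h
  · have := C.unitP h; rwa [norm_neg] at this

lemma neg_mem_phat {y : E3} (hy : y ∈ phat P) : -y ∈ phat P := by
  rcases C.mem_phat_iff.1 hy with h | h
  · exact C.mem_phat_iff.2 (Or.inr (by rwa [neg_neg]))
  · exact C.mem_phat_iff.2 (Or.inl h)

lemma mem_phat_of_mem {p : E3} (hp : p ∈ P) : p ∈ phat P := Or.inl hp

lemma clP_spec {y : E3} (hy : y ∈ phat P) : clP P y ∈ P ∧ (y = clP P y ∨ y = -(clP P y)) := by
  unfold clP
  split_ifs with h
  · exact ⟨h, Or.inl rfl⟩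
  · rcases C.mem_phat_iff.1 hy with h1 | h1
    · exact absurd h1 h
    · exact ⟨h1, Or.inr (by rw [neg_neg])⟩

lemma clP_mem {y : E3} (hy : y ∈ phat P) : clP P y ∈ P := (C.clP_spec hy).1

lemma clP_decomp {y : E3} (hy : y ∈ phat P) : y = clP P y ∨ y = -(clP P y) :=
  (C.clP_spec hy).2

lemma clP_of_mem {p : E3} (hp : p ∈ P) : clP P p = p := by
  unfold clP; simp [hp]

lemma clP_neg_of_mem {p : E3} (hp : p ∈ P) : clP P (-p) = p := by
  unfold clP
  have := C.no_antip hp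
  simp [this]

lemma clP_neg {y : E3} (hy : y ∈ phat P) : clP P (-y) = clP P y := by
  rcases C.mem_phat_iff.1 hy with h | h
  · rw [C.clP_of_mem h, C.clP_neg_of_mem h]
  · have h1 : clP P (- -y) = -y := C.clP_neg_of_mem h
    rw [neg_neg] at h1
    rw [h1, C.clP_of_mem h]

lemma clP_eq_iff {y z : E3} (hy : y ∈ phat P) (hz : z ∈ phat P) :
    clP P z = clP P y ↔ z = y ∨ z = -y := by
  constructor
  · intro h
    rcases C.clP_decomp hy with h1 | h1 <;> rcases C.clP_decomp hz with h2 | h2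
    · left; rw [h1, h2, h]
    · right; rw [h2, h, ← h1]
    · right; rw [h1, h2, h, neg_neg]
    · left; rw [h1, h2, h]
  · rintro (rfl | rfl)
    · rfl
    · exact C.clP_neg hy

lemma cl_ne_imp {a b : E3} (ha : a ∈ phat P) (hb : b ∈ phat P)
    (h : clP P b ≠ clP P a) : b ≠ a ∧ b ≠ -a := by
  constructor
  · intro h1; exact h ((C.clP_eq_iff ha hb).2 (Or.inl h1))
  · intro h1; exact h ((C.clP_eq_iff ha hb).2 (Or.inr h1))

lemma li2phat {a b : E3} (ha : a ∈ phat P) (hb : b ∈ phat P)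
    (h : clP P b ≠ clP P a) : LinearIndependent ℝ ![a, b] := by
  obtain ⟨h1, h2⟩ := C.cl_ne_imp ha hb h
  exact li2_of_units (C.phat_unit ha) (C.phat_unit hb) h1 h2

lemma li3phat {a b c : E3} (ha : a ∈ phat P) (hb : b ∈ phat P) (hc : c ∈ phat P)
    (h1 : clP P b ≠ clP P a) (h2 : clP P c ≠ clP P a) (h3 : clP P c ≠ clP P b) :
    LinearIndependent ℝ ![a, b, c] := by
  have hA := C.clP_mem ha
  have hB := C.clP_mem hb
  have hC := C.clP_mem hc
  have hli := C.hgen (clP P a) hA (clP P b) hB (clP P c) hC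
    (Ne.symm h1) (Ne.symm h2) (Ne.symm h3)
  exact li3_of_signs (C.clP_decomp ha) (C.clP_decomp hb) (C.clP_decomp hc) hli

lemma span_pair_ne {a b c d : E3} (ha : a ∈ phat P) (hb : b ∈ phat P) (hc : c ∈ phat P)
    (hd : d ∈ phat P) (hca : clP P c ≠ clP P a) (hcb : clP P c ≠ clP P b)
    (hda : clP P d ≠ clP P a) (hdb : clP P d ≠ clP P b) (hba : clP P b ≠ clP P a) :
    Submodule.span ℝ ({a, b} : Set E3) ≠ Submodule.span ℝ ({c, d} : Set E3) := by
  intro heq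
  have hcmem : c ∈ Submodule.span ℝ ({c, d} : Set E3) :=
    Submodule.subset_span (Set.mem_insert _ _)
  rw [← heq] at hcmem
  exact not_mem_span_pair (C.li3phat hc ha hb hca.symm hcb.symm hba) hcmem
  
end Good
end PartB

section PartB2

lemma mem_arc_of_coords {a b x : E3} (hx : ‖x‖ = 1) {α β : ℝ} (hα : 0 ≤ α) (hβ : 0 ≤ β)
    (hrepr : x = α • a + β • b) : x ∈ arc a b := by
  have hab : ¬(α = 0 ∧ β = 0) := by
    rintro ⟨rfl, rfl⟩; simp at hrepr; rw [hrepr] at hx; simp at hx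
  have hs : 0 < α + β := by
    rcases lt_or_eq_of_le hα with h1 | h1
    · linarith
    · rcases lt_or_eq_of_le hβ with h2 | h2
      · linarith
      · exact absurd ⟨h1.symm, h2.symm⟩ hab
  subst hrepr
  refine ⟨β / (α + β), ⟨by positivity, by rw [div_le_one hs]; linarith⟩, ?_⟩
  have hrepr2 : (1 - β / (α + β)) • a + (β / (α + β)) • b
      = (α + β)⁻¹ • (α • a + β • b) := by
    rw [smul_add, smul_smul, smul_smul]
    congr 2
    · field_simp; ring
    · field_simp
  rw [hrepr2, norm_smul, Real.norm_eq_abs, abs_inv, abs_of_pos hs, hx, mul_one,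
    inv_inv, smul_smul, mul_inv_cancel₀ hs.ne', one_smul]

lemma arc_coords {a b x : E3} (h : LinearIndependent ℝ ![a, b]) (hx : x ∈ arc a b) :
    ‖x‖ = 1 ∧ ∃ α β : ℝ, 0 ≤ α ∧ 0 ≤ β ∧ x = α • a + β • b := (mem_arc_iff h).1 hx

/-- picking the sign to make the coefficient positive -/
lemma sign_choice (A : E3) {α : ℝ} (hα : α ≠ 0) :
    ∃ a : E3, ∃ ε : ℝ, (a = A ∨ a = -A) ∧ 0 < ε ∧ ε • a = α • A := by
  rcases lt_or_gt_of_ne hα with h | h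
  · exact ⟨-A, -α, Or.inr rfl, by linarith, by rw [smul_neg, ← neg_smul, neg_neg]⟩
  · exact ⟨A, α, Or.inl rfl, h, rfl⟩

/-- forcing of signs: a point with strictly positive coordinates in basis `(a, b)` which
lies on an arc between `±a` and `±b` forces the positive signs. -/
lemma sign_force {a b w a' b' : E3} (li : LinearIndependent ℝ ![a, b]) {α β : ℝ}
    (hα : 0 < α) (hβ : 0 < β) (hw : w = α • a + β • b)
    (ha' : a' = a ∨ a' = -a) (hb' : b' = b ∨ b' = -b)
    {α' β' : ℝ} (hα' : 0 ≤ α') (hβ' : 0 ≤ β') (hw' : w = α' • a' + β' • b') :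
    a' = a ∧ b' = b := by
  rcases ha' with h | h <;> rcases hb' with h2 | h2
  · exact ⟨h, h2⟩
  · exfalso
    rw [h, h2, smul_neg, ← neg_smul] at hw'
    obtain ⟨e1, e2⟩ := coords_unique li (hw.symm.trans hw')
    linarith
  · exfalso
    rw [h, h2, smul_neg, ← neg_smul] at hw'
    obtain ⟨e1, e2⟩ := coords_unique li (hw.symm.trans hw')
    linarith
  · exfalso
    rw [h, h2, smul_neg, ← neg_smul, smul_neg, ← neg_smul] at hw'
    obtain ⟨e1, e2⟩ := coords_unique li (hw.symm.trans hw')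
    linarith

namespace Good

variable {k : ℕ} {P P' : Set E3} {v : E3 → E3} (C : Good k P P' v)
include C

/-- nonzero coordinates for a unit point in two "independent" planes -/
lemma coords_nz {a b c d x : E3} (ha : a ∈ phat P) (hb : b ∈ phat P) (hc : c ∈ phat P)
    (hd : d ∈ phat P) (hca : clP P c ≠ clP P a) (hcb : clP P c ≠ clP P b)
    (hda : clP P d ≠ clP P a) (hdb : clP P d ≠ clP P b) (hdc : clP P d ≠ clP P c)
    {α β : ℝ} (hx : x = α • a + β • b)
    (hxcd : x ∈ Submodule.span ℝ ({c, d} : Set E3)) (hxu : ‖x‖ = 1) :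
    α ≠ 0 ∧ β ≠ 0 := by
  have hx0 : x ≠ 0 := fun h => by rw [h] at hxu; simp at hxu
  constructor
  · intro h0
    rw [h0, zero_smul, zero_add] at hx
    have hβ : β ≠ 0 := fun h => by rw [h, zero_smul] at hx; exact hx0 hx
    have hbmem : b ∈ Submodule.span ℝ ({c, d} : Set E3) := by
      have : β⁻¹ • x = b := by rw [hx, smul_smul, inv_mul_cancel₀ hβ, one_smul]
      rw [← this]; exact Submodule.smul_mem _ _ hxcd
    exact not_mem_span_pair (C.li3phat hb hc hd hcb hdb hdc) hbmem
  · intro h0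
    rw [h0, zero_smul, add_zero] at hx
    have hα : α ≠ 0 := fun h => by rw [h, zero_smul] at hx; exact hx0 hx
    have hamem : a ∈ Submodule.span ℝ ({c, d} : Set E3) := by
      have : α⁻¹ • x = a := by rw [hx, smul_smul, inv_mul_cancel₀ hα, one_smul]
      rw [← this]; exact Submodule.smul_mem _ _ hxcd
    exact not_mem_span_pair (C.li3phat ha hc hd hca hda hdc) hamem

/-- Two arcs whose endpoint pairs share a class have no crossing point. -/
lemma shared_no_cross {a b c d x : E3} (ha : a ∈ phat P) (hb : b ∈ phat P)
    (hc : c ∈ phat P) (hd : d ∈ phat P) (hba : clP P b ≠ clP P a)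
    (hdc : clP P d ≠ clP P c) (hcls : clP P c = clP P a)
    (hdiff : ({a, b} : Set E3) ≠ ({c, d} : Set E3))
    (hx1 : x ∈ arc a b) (hx2 : x ∈ arc c d)
    (hxe1 : x ∉ ({a, b} : Set E3)) (hxe2 : x ∉ ({c, d} : Set E3)) : False := by
  have li_ab := C.li2phat ha hb hba
  have li_cd := C.li2phat hc hd hdc
  obtain ⟨hxu, α, β, hα, hβ, hxab⟩ := arc_coords li_ab hx1
  obtain ⟨-, γ, δ, hγ, hδ, hxcd⟩ := arc_coords li_cd hx2
  have hcsgn : c = a ∨ c = -a := (C.clP_eq_iff ha hc).1 hcls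
  have hxnec : x ≠ c := fun h => hxe2 (by rw [h]; exact Set.mem_insert _ _)
  have hxned : x ≠ d := fun h => hxe2 (by rw [h]; exact Set.mem_insert_of_mem _ rfl)
  have hxnea : x ≠ a := fun h => hxe1 (by rw [h]; exact Set.mem_insert _ _)
  have hxneb : x ≠ b := fun h => hxe1 (by rw [h]; exact Set.mem_insert_of_mem _ rfl)
  by_cases hdb : clP P d = clP P b
  · -- same plane case
    have hdsgn : d = b ∨ d = -b := (C.clP_eq_iff hb hd).1 hdb
    rcases hcsgn with h | h
    · rcases hdsgn with h2 | h2
      · exact hdiff (by rw [h, h2])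
      · -- c = a, d = -b
        have hxcd' := hxcd
        rw [h, h2, smul_neg, ← neg_smul] at hxcd'
        obtain ⟨e1, e2⟩ := coords_unique li_ab (hxab.symm.trans hxcd')
        have hδ0 : δ = 0 := by linarith
        rw [hδ0, zero_smul, add_zero] at hxcd
        exact hxnec (unit_smul_unit_nonneg hxu (C.phat_unit hc) hγ hxcd)
    · rcases hdsgn with h2 | h2
      · -- c = -a, d = b
        have hxcd' := hxcd
        rw [h, h2, smul_neg, ← neg_smul] at hxcd'
        obtain ⟨e1, e2⟩ := coords_unique li_ab (hxab.symm.trans hxcd')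
        have hγ0 : γ = 0 := by linarith
        rw [hγ0, zero_smul, zero_add] at hxcd
        exact hxned (unit_smul_unit_nonneg hxu (C.phat_unit hd) hδ hxcd)
      · -- c = -a, d = -b
        have hxcd' := hxcd
        rw [h, h2, smul_neg, ← neg_smul, smul_neg, ← neg_smul] at hxcd'
        obtain ⟨e1, e2⟩ := coords_unique li_ab (hxab.symm.trans hxcd')
        have hγ0 : γ = 0 := by linarith
        have hδ0 : δ = 0 := by linarith
        rw [hγ0, hδ0, zero_smul, zero_smul, add_zero] at hxcd
        rw [hxcd] at hxu; simp at hxu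
  · -- d is a third class
    have hdmem : δ • d = x - γ • c := by rw [hxcd]; abel
    have hspan : δ • d ∈ Submodule.span ℝ ({a, b} : Set E3) := by
      rw [hdmem]
      apply Submodule.sub_mem
      · rw [hxab]; exact Submodule.mem_span_pair.2 ⟨α, β, rfl⟩
      · rcases hcsgn with h | h <;> rw [h]
        · exact Submodule.smul_mem _ _ (Submodule.subset_span (Set.mem_insert _ _))
        · rw [smul_neg, ← neg_smul]
          exact Submodule.smul_mem _ _ (Submodule.subset_span (Set.mem_insert _ _))
    have hδ0 : δ = 0 := by
      by_contra hδ0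
      have hdmem2 : d ∈ Submodule.span ℝ ({a, b} : Set E3) := by
        have : δ⁻¹ • (δ • d) = d := by rw [smul_smul, inv_mul_cancel₀ hδ0, one_smul]
        rw [← this]; exact Submodule.smul_mem _ _ hspan
      have hda : clP P d ≠ clP P a := fun h => hdc (h.trans hcls.symm)
      exact not_mem_span_pair (C.li3phat hd ha hb (Ne.symm hda) (Ne.symm hdb) hba) hdmem2
    rw [hδ0, zero_smul, add_zero] at hxcd
    exact hxnec (unit_smul_unit_nonneg hxu (C.phat_unit hc) hγ hxcd)

end Good
end PartB2

section PartB3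

lemma span_of_signs {a b a' b' x : E3} {α' β' : ℝ} (ha : a' = a ∨ a' = -a)
    (hb : b' = b ∨ b' = -b) (hx : x = α' • a' + β' • b') :
    x ∈ Submodule.span ℝ ({a, b} : Set E3) := by
  rcases ha with h | h <;> rcases hb with h2 | h2 <;> rw [h, h2] at hx
  · exact Submodule.mem_span_pair.2 ⟨α', β', hx.symm⟩
  · exact Submodule.mem_span_pair.2 ⟨α', -β', by rw [hx, smul_neg, ← neg_smul]⟩
  · exact Submodule.mem_span_pair.2 ⟨-α', β', by rw [hx, smul_neg, ← neg_smul]⟩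
  · exact Submodule.mem_span_pair.2 ⟨-α', -β', by
      rw [hx, smul_neg, ← neg_smul, smul_neg, ← neg_smul]⟩

namespace Good

variable {k : ℕ} {P P' : Set E3} {v : E3 → E3} (C : Good k P P' v)
include C

lemma sign_choice_phat {A : E3} (hA : A ∈ P) {α : ℝ} (hα : α ≠ 0) :
    ∃ a : E3, ∃ ε : ℝ, a ∈ phat P ∧ clP P a = A ∧ 0 < ε ∧ ε • a = α • A := by
  obtain ⟨a, ε, hsgn, hε, heq⟩ := sign_choice A hα
  rcases hsgn with h | h
  · refine ⟨a, ε, ?_, ?_, hε, heq⟩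
    · rw [h]; exact C.mem_phat_of_mem hA
    · rw [h]; exact C.clP_of_mem hA
  · refine ⟨a, ε, ?_, ?_, hε, heq⟩
    · rw [h]; exact C.neg_mem_phat (C.mem_phat_of_mem hA)
    · rw [h]; exact C.clP_neg_of_mem hA

/-- Rigidity: two crossing sign-choices over the same four classes agree up to
global negation. -/
lemma AA_fiber {a b c d a' b' c' d' x x' : E3}
    (ha : a ∈ phat P) (hb : b ∈ phat P) (hc : c ∈ phat P) (hd : d ∈ phat P)
    (ha' : a' ∈ phat P) (hb' : b' ∈ phat P) (hc' : c' ∈ phat P) (hd' : d' ∈ phat P)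
    (h1 : clP P b ≠ clP P a) (h2 : clP P c ≠ clP P a) (h3 : clP P c ≠ clP P b)
    (h4 : clP P d ≠ clP P a) (h5 : clP P d ≠ clP P b) (h6 : clP P d ≠ clP P c)
    (ea : clP P a' = clP P a) (eb : clP P b' = clP P b) (ec : clP P c' = clP P c)
    (ed : clP P d' = clP P d)
    (hx1 : x ∈ arc a b) (hx2 : x ∈ arc c d) (hx1' : x' ∈ arc a' b') (hx2' : x' ∈ arc c' d') :
    (a' = a ∧ b' = b ∧ c' = c ∧ d' = d) ∨ (a' = -a ∧ b' = -b ∧ c' = -c ∧ d' = -d) := by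
  have hA : a' = a ∨ a' = -a := (C.clP_eq_iff ha ha').1 ea
  have hB : b' = b ∨ b' = -b := (C.clP_eq_iff hb hb').1 eb
  have hC : c' = c ∨ c' = -c := (C.clP_eq_iff hc hc').1 ec
  have hD : d' = d ∨ d' = -d := (C.clP_eq_iff hd hd').1 ed
  have li_ab := C.li2phat ha hb h1
  have li_cd := C.li2phat hc hd h6
  have li_ab' := C.li2phat ha' hb' (by rw [ea, eb]; exact h1)
  have li_cd' := C.li2phat hc' hd' (by rw [ec, ed]; exact h6)
  obtain ⟨hxu, α, β, hα, hβ, hxab⟩ := arc_coords li_ab hx1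
  obtain ⟨-, γ, δ, hγ, hδ, hxcd⟩ := arc_coords li_cd hx2
  obtain ⟨hxu', α', β', hα', hβ', hxab'⟩ := arc_coords li_ab' hx1'
  obtain ⟨-, γ', δ', hγ', hδ', hxcd'⟩ := arc_coords li_cd' hx2'
  have hxspanab : x ∈ Submodule.span ℝ ({a, b} : Set E3) :=
    Submodule.mem_span_pair.2 ⟨α, β, hxab.symm⟩
  have hxspancd : x ∈ Submodule.span ℝ ({c, d} : Set E3) :=
    Submodule.mem_span_pair.2 ⟨γ, δ, hxcd.symm⟩
  have hxspanab' : x' ∈ Submodule.span ℝ ({a, b} : Set E3) := span_of_signs hA hB hxab'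
  have hxspancd' : x' ∈ Submodule.span ℝ ({c, d} : Set E3) := span_of_signs hC hD hxcd'
  obtain ⟨hαnz, hβnz⟩ := C.coords_nz ha hb hc hd h2 h3 h4 h5 h6 hxab hxspancd hxu
  obtain ⟨hγnz, hδnz⟩ := C.coords_nz hc hd ha hb h2.symm (Ne.symm h4) (Ne.symm h3)
    (Ne.symm h5) h1 hxcd hxspanab hxu
  have hαpos : 0 < α := lt_of_le_of_ne hα (Ne.symm hαnz)
  have hβpos : 0 < β := lt_of_le_of_ne hβ (Ne.symm hβnz)
  have hγpos : 0 < γ := lt_of_le_of_ne hγ (Ne.symm hγnz)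
  have hδpos : 0 < δ := lt_of_le_of_ne hδ (Ne.symm hδnz)
  have hne := C.span_pair_ne ha hb hc hd h2 h3 h4 h5 h1
  obtain ⟨x₀, hx₀u, hx₀ab, hx₀cd, huniq⟩ := planes_sphere_inter li_ab li_cd hne
  have hxcase := huniq x hxu hxspanab hxspancd
  have hxcase' := huniq x' hxu' hxspanab' hxspancd'
  have hxx : x' = x ∨ x' = -x := by
    rcases hxcase with h | h <;> rcases hxcase' with h' | h'
    · left; rw [h', h]
    · right; rw [h', h]
    · right; rw [h', h, neg_neg]
    · left; rw [h', h]
  rcases hxx with h | h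
  · left
    rw [h] at hxab' hxcd'
    obtain ⟨g1, g2⟩ := sign_force li_ab hαpos hβpos hxab hA hB hα' hβ' hxab'
    obtain ⟨g3, g4⟩ := sign_force li_cd hγpos hδpos hxcd hC hD hγ' hδ' hxcd'
    exact ⟨g1, g2, g3, g4⟩
  · right
    rw [h] at hxab' hxcd'
    have li_nab : LinearIndependent ℝ ![-a, -b] := C.li2phat (C.neg_mem_phat ha)
      (C.neg_mem_phat hb) (by rw [C.clP_neg ha, C.clP_neg hb]; exact h1)
    have li_ncd : LinearIndependent ℝ ![-c, -d] := C.li2phat (C.neg_mem_phat hc)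
      (C.neg_mem_phat hd) (by rw [C.clP_neg hc, C.clP_neg hd]; exact h6)
    have hnxab : -x = α • -a + β • -b := by
      rw [hxab, smul_neg, smul_neg, ← neg_add]
    have hnxcd : -x = γ • -c + δ • -d := by
      rw [hxcd, smul_neg, smul_neg, ← neg_add]
    have hA' : a' = -a ∨ a' = -(-a) := by
      rcases hA with h' | h'
      · exact Or.inr (by rw [h', neg_neg])
      · exact Or.inl h'
    have hB' : b' = -b ∨ b' = -(-b) := by
      rcases hB with h' | h'
      · exact Or.inr (by rw [h', neg_neg])
      · exact Or.inl h'
    have hC' : c' = -c ∨ c' = -(-c) := by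
      rcases hC with h' | h'
      · exact Or.inr (by rw [h', neg_neg])
      · exact Or.inl h'
    have hD' : d' = -d ∨ d' = -(-d) := by
      rcases hD with h' | h'
      · exact Or.inr (by rw [h', neg_neg])
      · exact Or.inl h'
    obtain ⟨g1, g2⟩ := sign_force li_nab hαpos hβpos hnxab hA' hB' hα' hβ' hxab'
    obtain ⟨g3, g4⟩ := sign_force li_ncd hγpos hδpos hnxcd hC' hD' hγ' hδ' hxcd'
    exact ⟨g1, g2, g3, g4⟩

/-- Existence: every ordered 4-tuple of distinct classes supports a crossing
sign-choice. -/
lemma AA_exists {A B Cc D : E3} (hA : A ∈ P) (hB : B ∈ P) (hC : Cc ∈ P) (hD : D ∈ P)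
    (n1 : B ≠ A) (n2 : Cc ≠ A) (n3 : Cc ≠ B) (n4 : D ≠ A) (n5 : D ≠ B) (n6 : D ≠ Cc) :
    ∃ a b c d x : E3, a ∈ phat P ∧ b ∈ phat P ∧ c ∈ phat P ∧ d ∈ phat P ∧
      clP P a = A ∧ clP P b = B ∧ clP P c = Cc ∧ clP P d = D ∧
      x ∈ arc a b ∧ x ∈ arc c d := by
  have mA := C.mem_phat_of_mem hA
  have mB := C.mem_phat_of_mem hB
  have mC := C.mem_phat_of_mem hC
  have mD := C.mem_phat_of_mem hD
  have c1 : clP P B ≠ clP P A := by rw [C.clP_of_mem hA, C.clP_of_mem hB]; exact n1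
  have c2 : clP P Cc ≠ clP P A := by rw [C.clP_of_mem hA, C.clP_of_mem hC]; exact n2
  have c3 : clP P Cc ≠ clP P B := by rw [C.clP_of_mem hB, C.clP_of_mem hC]; exact n3
  have c4 : clP P D ≠ clP P A := by rw [C.clP_of_mem hA, C.clP_of_mem hD]; exact n4
  have c5 : clP P D ≠ clP P B := by rw [C.clP_of_mem hB, C.clP_of_mem hD]; exact n5
  have c6 : clP P D ≠ clP P Cc := by rw [C.clP_of_mem hC, C.clP_of_mem hD]; exact n6
  have li_AB := C.li2phat mA mB c1
  have li_CD := C.li2phat mC mD c6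
  have hne := C.span_pair_ne mA mB mC mD c2 c3 c4 c5 c1
  obtain ⟨x₀, hx₀u, hx₀ab, hx₀cd, -⟩ := planes_sphere_inter li_AB li_CD hne
  obtain ⟨α, β, hx1⟩ := Submodule.mem_span_pair.1 hx₀ab
  obtain ⟨γ, δ, hx2⟩ := Submodule.mem_span_pair.1 hx₀cd
  obtain ⟨hαnz, hβnz⟩ := C.coords_nz mA mB mC mD c2 c3 c4 c5 c6 hx1.symm hx₀cd hx₀u
  obtain ⟨hγnz, hδnz⟩ := C.coords_nz mC mD mA mB c2.symm (Ne.symm c4) (Ne.symm c3)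
    (Ne.symm c5) c1 hx2.symm hx₀ab hx₀u
  obtain ⟨a, ε₁, hma, hcla, hε₁, he₁⟩ := C.sign_choice_phat hA hαnz
  obtain ⟨b, ε₂, hmb, hclb, hε₂, he₂⟩ := C.sign_choice_phat hB hβnz
  obtain ⟨c, ε₃, hmc, hclc, hε₃, he₃⟩ := C.sign_choice_phat hC hγnz
  obtain ⟨d, ε₄, hmd, hcld, hε₄, he₄⟩ := C.sign_choice_phat hD hδnz
  refine ⟨a, b, c, d, x₀, hma, hmb, hmc, hmd, hcla, hclb, hclc, hcld, ?_, ?_⟩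
  · exact mem_arc_of_coords hx₀u hε₁.le hε₂.le (by rw [he₁, he₂, hx1])
  · exact mem_arc_of_coords hx₀u hε₃.le hε₄.le (by rw [he₃, he₄, hx2])

end Good
end PartB3

section PartB4
namespace Good

variable {k : ℕ} {P P' : Set E3} {v : E3 → E3} (C : Good k P P' v)
include C

lemma hv1 {p : E3} (hp : p ∈ P') : ‖p‖ = 1 := C.unitP (C.hP' hp)
lemma hv2 {p : E3} (hp : p ∈ P') : ‖v p‖ = 1 := (C.hv p hp).1
lemma hv3 {p : E3} (hp : p ∈ P') : ⟪p, v p⟫ = 0 := (C.hv p hp).2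

lemma li_pv {p : E3} (hp : p ∈ P') : LinearIndependent ℝ ![p, v p] :=
  li2_orthonormal (C.hv1 hp) (C.hv2 hp) (C.hv3 hp)

lemma clP_P' {p : E3} (hp : p ∈ P') : clP P p = p := C.clP_of_mem (C.hP' hp)

lemma hgc' {p : E3} (hp : p ∈ P') {y : E3} (hy : y ∈ phat P)
    (hspan : y ∈ Submodule.span ℝ ({p, v p} : Set E3)) : y = p ∨ y = -p := by
  have h := C.hgc p hp
  have hy2 : y ∈ ((Submodule.span ℝ {p, v p} : Set E3) ∩ unitSphere) ∩ phat P :=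
    ⟨⟨hspan, C.phat_unit hy⟩, hy⟩
  rw [h] at hy2
  simpa using hy2

lemma H_coords {p x : E3} (hp : p ∈ P') (hx : x ∈ halfCircle p (v p)) :
    ∃ α β : ℝ, α ^ 2 + β ^ 2 = 1 ∧ 0 ≤ β ∧ x = α • p + β • (v p) :=
  (mem_halfCircle_iff (C.hv1 hp) (C.hv2 hp) (C.hv3 hp)).1 hx

lemma H_unit {p x : E3} (hp : p ∈ P') (hx : x ∈ halfCircle p (v p)) : ‖x‖ = 1 :=
  halfCircle_unit (C.hv1 hp) (C.hv2 hp) (C.hv3 hp) hx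

/-- A point of `phat P` on the great circle plane of `p` is `±p`. -/
lemma plane_ne_H {p : E3} (hp : p ∈ P') {b c : E3} (hb : b ∈ phat P)
    (hcb : clP P b ≠ p) :
    Submodule.span ℝ ({p, v p} : Set E3) ≠ Submodule.span ℝ ({b, c} : Set E3) := by
  intro h
  have hbU : b ∈ Submodule.span ℝ ({p, v p} : Set E3) := by
    rw [h]; exact Submodule.subset_span (Set.mem_insert _ _)
  rcases C.hgc' hp hb hbU with h1 | h1
  · exact hcb (by rw [h1, C.clP_P' hp])
  · exact hcb (by rw [h1, C.clP_neg (C.mem_phat_of_mem (C.hP' hp)), C.clP_P' hp])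

/-- coefficient of `v p` of a common point of the H-plane and an arc-plane is nonzero -/
lemma H_coeff_nz {p : E3} (hp : p ∈ P') {b c x : E3} (hb : b ∈ phat P) (hc : c ∈ phat P)
    (hbp : clP P b ≠ p) (hcp : clP P c ≠ p) (hcb : clP P c ≠ clP P b)
    {α β : ℝ} (hx : x = α • p + β • (v p)) (hxu : ‖x‖ = 1)
    (hxW : x ∈ Submodule.span ℝ ({b, c} : Set E3)) : β ≠ 0 := by
  intro h0
  rw [h0, zero_smul, add_zero] at hx
  rcases unit_smul_unit hxu (C.hv1 hp) hx with h | h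
  · have : p ∈ Submodule.span ℝ ({b, c} : Set E3) := h ▸ hxW
    exact not_mem_span_pair (C.li3phat (C.mem_phat_of_mem (C.hP' hp)) hb hc
      (by rw [C.clP_P' hp]; exact hbp) (by rw [C.clP_P' hp]; exact hcp) hcb) this
  · have : p ∈ Submodule.span ℝ ({b, c} : Set E3) := by
      have : p = -x := by rw [h, neg_neg]
      rw [this]; exact Submodule.neg_mem _ hxW
    exact not_mem_span_pair (C.li3phat (C.mem_phat_of_mem (C.hP' hp)) hb hc
      (by rw [C.clP_P' hp]; exact hbp) (by rw [C.clP_P' hp]; exact hcp) hcb) this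

/-- coefficients of a common point wrt the arc basis are nonzero -/
lemma arc_coeff_nz_H {p : E3} (hp : p ∈ P') {b c x : E3} (hb : b ∈ phat P) (hc : c ∈ phat P)
    (hbp : clP P b ≠ p) (hcp : clP P c ≠ p)
    {γ δ : ℝ} (hx : x = γ • b + δ • c) (hxu : ‖x‖ = 1)
    (hxU : x ∈ Submodule.span ℝ ({p, v p} : Set E3)) : γ ≠ 0 ∧ δ ≠ 0 := by
  have hx0 : x ≠ 0 := fun h => by rw [h] at hxu; simp at hxu
  constructor
  · intro h0
    rw [h0, zero_smul, zero_add] at hx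
    rcases unit_smul_unit hxu (C.phat_unit hc) hx with h | h
    · rcases C.hgc' hp (h ▸ hc) (h ▸ hxU) with h1 | h1
      · exact hcp (by rw [← h, h1, C.clP_P' hp])
      · exact hcp (by rw [← h, h1, C.clP_neg (C.mem_phat_of_mem (C.hP' hp)), C.clP_P' hp])
    · rw [h] at hxU
      rcases C.hgc' hp (C.neg_mem_phat hc) hxU with h1 | h1
      · have : c = -p := by rw [← neg_neg c, h1]
        exact hcp (by rw [this, C.clP_neg (C.mem_phat_of_mem (C.hP' hp)), C.clP_P' hp])
      · have : c = p := by rw [← neg_neg c, h1, neg_neg]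
        exact hcp (by rw [this, C.clP_P' hp])
  · intro h0
    rw [h0, zero_smul, add_zero] at hx
    rcases unit_smul_unit hxu (C.phat_unit hb) hx with h | h
    · rcases C.hgc' hp (h ▸ hb) (h ▸ hxU) with h1 | h1
      · exact hbp (by rw [← h, h1, C.clP_P' hp])
      · exact hbp (by rw [← h, h1, C.clP_neg (C.mem_phat_of_mem (C.hP' hp)), C.clP_P' hp])
    · rw [h] at hxU
      rcases C.hgc' hp (C.neg_mem_phat hb) hxU with h1 | h1
      · have : b = -p := by rw [← neg_neg b, h1]
        exact hbp (by rw [this, C.clP_neg (C.mem_phat_of_mem (C.hP' hp)), C.clP_P' hp])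
      · have : b = p := by rw [← neg_neg b, h1, neg_neg]
        exact hbp (by rw [this, C.clP_P' hp])

/-- AH rigidity: for a fixed `p` and fixed classes, the crossing arc is unique. -/
lemma AH_fiber {p : E3} (hp : p ∈ P') {b c b' c' x x' : E3}
    (hb : b ∈ phat P) (hc : c ∈ phat P) (hb' : b' ∈ phat P) (hc' : c' ∈ phat P)
    (hbp : clP P b ≠ p) (hcp : clP P c ≠ p) (hcb : clP P c ≠ clP P b)
    (eb : clP P b' = clP P b) (ec : clP P c' = clP P c)
    (hx1 : x ∈ halfCircle p (v p)) (hx2 : x ∈ arc b c)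
    (hx1' : x' ∈ halfCircle p (v p)) (hx2' : x' ∈ arc b' c') :
    b' = b ∧ c' = c := by
  have hB : b' = b ∨ b' = -b := (C.clP_eq_iff hb hb').1 eb
  have hC : c' = c ∨ c' = -c := (C.clP_eq_iff hc hc').1 ec
  have li_bc := C.li2phat hb hc hcb
  have li_bc' := C.li2phat hb' hc' (by rw [eb, ec]; exact hcb)
  obtain ⟨α, β, hn1, hβ, hxpv⟩ := C.H_coords hp hx1
  obtain ⟨α', β', hn1', hβ', hxpv'⟩ := C.H_coords hp hx1'
  have hxu := C.H_unit hp hx1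
  have hxu' := C.H_unit hp hx1'
  obtain ⟨-, γ, δ, hγ, hδ, hxbc⟩ := arc_coords li_bc hx2
  obtain ⟨-, γ', δ', hγ', hδ', hxbc'⟩ := arc_coords li_bc' hx2'
  have hxW : x ∈ Submodule.span ℝ ({b, c} : Set E3) :=
    Submodule.mem_span_pair.2 ⟨γ, δ, hxbc.symm⟩
  have hxW' : x' ∈ Submodule.span ℝ ({b, c} : Set E3) := span_of_signs hB hC hxbc'
  have hxU : x ∈ Submodule.span ℝ ({p, v p} : Set E3) :=
    Submodule.mem_span_pair.2 ⟨α, β, hxpv.symm⟩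
  have hxU' : x' ∈ Submodule.span ℝ ({p, v p} : Set E3) :=
    Submodule.mem_span_pair.2 ⟨α', β', hxpv'.symm⟩
  have hβnz := C.H_coeff_nz hp hb hc hbp hcp hcb hxpv hxu hxW
  have hβnz' := C.H_coeff_nz hp hb hc hbp hcp hcb hxpv' hxu' hxW'
  have hβpos : 0 < β := lt_of_le_of_ne hβ (Ne.symm hβnz)
  have hβpos' : 0 < β' := lt_of_le_of_ne hβ' (Ne.symm hβnz')
  have hne := C.plane_ne_H hp hb hbp (c := c)
  obtain ⟨x₀, hx₀u, hx₀U, hx₀W, huniq⟩ := planes_sphere_inter (C.li_pv hp) li_bc hne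
  have hxcase := huniq x hxu hxU hxW
  have hxcase' := huniq x' hxu' hxU' hxW'
  have hcontra : x' ≠ -x := by
    intro hxy
    rw [hxy] at hxpv'
    have hnx : -x = (-α) • p + (-β) • (v p) := by
      rw [hxpv, neg_smul, neg_smul, ← neg_add]
    obtain ⟨e1, e2⟩ := coords_unique (C.li_pv hp) (hnx.symm.trans hxpv')
    linarith
  have hxx : x' = x := by
    rcases hxcase with h | h <;> rcases hxcase' with h' | h'
    · rw [h', h]
    · exact absurd (by rw [h', h] : x' = -x) hcontra
    · exact absurd (by rw [h', h, neg_neg] : x' = -x) hcontra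
    · rw [h', h]
  rw [hxx] at hxbc'
  obtain ⟨hγnz, hδnz⟩ := C.arc_coeff_nz_H hp hb hc hbp hcp hxbc hxu hxU
  exact sign_force li_bc (lt_of_le_of_ne hγ (Ne.symm hγnz)) (lt_of_le_of_ne hδ (Ne.symm hδnz))
    hxbc hB hC hγ' hδ' hxbc'

/-- AH existence. -/
lemma AH_exists {p : E3} (hp : p ∈ P') {B Cc : E3} (hB : B ∈ P) (hC : Cc ∈ P)
    (nB : B ≠ p) (nC : Cc ≠ p) (nCB : Cc ≠ B) :
    ∃ b c x : E3, b ∈ phat P ∧ c ∈ phat P ∧ clP P b = B ∧ clP P c = Cc ∧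
      x ∈ halfCircle p (v p) ∧ x ∈ arc b c := by
  have mB := C.mem_phat_of_mem hB
  have mC := C.mem_phat_of_mem hC
  have cB : clP P B ≠ p := by rw [C.clP_of_mem hB]; exact nB
  have cC : clP P Cc ≠ p := by rw [C.clP_of_mem hC]; exact nC
  have cCB : clP P Cc ≠ clP P B := by rw [C.clP_of_mem hB, C.clP_of_mem hC]; exact nCB
  have li_BC := C.li2phat mB mC cCB
  have hne := C.plane_ne_H hp mB cB (c := Cc)
  obtain ⟨x₀, hx₀u, hx₀U, hx₀W, -⟩ := planes_sphere_inter (C.li_pv hp) li_BC hne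
  obtain ⟨α, β, hx1⟩ := Submodule.mem_span_pair.1 hx₀U
  have hβnz := C.H_coeff_nz hp mB mC cB cC cCB hx1.symm hx₀u hx₀W
  -- replace x₀ by ±x₀ to make β positive
  obtain ⟨y, α₁, β₁, hyu, hyU, hyW, hβ₁, hy⟩ :
      ∃ y : E3, ∃ α₁ β₁ : ℝ, ‖y‖ = 1 ∧ y ∈ Submodule.span ℝ ({p, v p} : Set E3) ∧
        y ∈ Submodule.span ℝ ({B, Cc} : Set E3) ∧ 0 < β₁ ∧ y = α₁ • p + β₁ • (v p) := by
    rcases lt_or_gt_of_ne hβnz with h | h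
    · refine ⟨-x₀, -α, -β, by rw [norm_neg]; exact hx₀u, Submodule.neg_mem _ hx₀U,
        Submodule.neg_mem _ hx₀W, by linarith, ?_⟩
      rw [← hx1, neg_smul, neg_smul, ← neg_add]
    · exact ⟨x₀, α, β, hx₀u, hx₀U, hx₀W, h, hx1.symm⟩
  have hyH : y ∈ halfCircle p (v p) := by
    refine (mem_halfCircle_iff (C.hv1 hp) (C.hv2 hp) (C.hv3 hp)).2 ⟨α₁, β₁, ?_, hβ₁.le, hy⟩
    have := norm_sq_combo (C.hv1 hp) (C.hv2 hp) (C.hv3 hp) (α := α₁) (β := β₁)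
    rw [← hy, hyu] at this
    rw [← this]; norm_num
  obtain ⟨γ, δ, hy2⟩ := Submodule.mem_span_pair.1 hyW
  obtain ⟨hγnz, hδnz⟩ := C.arc_coeff_nz_H hp mB mC cB cC hy2.symm hyu hyU
  obtain ⟨b, ε₁, hmb, hclb, hε₁, he₁⟩ := C.sign_choice_phat hB hγnz
  obtain ⟨c, ε₂, hmc, hclc, hε₂, he₂⟩ := C.sign_choice_phat hC hδnz
  refine ⟨b, c, y, hmb, hmc, hclb, hclc, hyH, ?_⟩
  exact mem_arc_of_coords hyu hε₁.le hε₂.le (by rw [he₁, he₂, hy2])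

/-- Common points of an AA crossing are not endpoints. -/
lemma AA_nonendpoint {a b c d x : E3}
    (ha : a ∈ phat P) (hb : b ∈ phat P) (hc : c ∈ phat P) (hd : d ∈ phat P)
    (h1 : clP P b ≠ clP P a) (h2 : clP P c ≠ clP P a) (h3 : clP P c ≠ clP P b)
    (h4 : clP P d ≠ clP P a) (h5 : clP P d ≠ clP P b) (h6 : clP P d ≠ clP P c)
    (hx1 : x ∈ arc a b) (hx2 : x ∈ arc c d) :
    x ∉ ({a, b} : Set E3) ∧ x ∉ ({c, d} : Set E3) := by
  have hxab : x ∈ Submodule.span ℝ ({a, b} : Set E3) := arc_subset_span hx1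
  have hxcd : x ∈ Submodule.span ℝ ({c, d} : Set E3) := arc_subset_span hx2
  constructor
  · rintro (rfl | rfl)
    · exact not_mem_span_pair (C.li3phat ha hc hd h2 h4 h6) hxcd
    · exact not_mem_span_pair (C.li3phat hb hc hd h3 h5 h6) hxcd
  · rintro (rfl | rfl)
    · exact not_mem_span_pair (C.li3phat hc ha hb h2.symm (Ne.symm h3) h1) hxab
    · exact not_mem_span_pair (C.li3phat hd ha hb (Ne.symm h4) (Ne.symm h5) h1) hxab

/-- Common points of an AH crossing are not endpoints. -/
lemma AH_nonendpoint {p b c x : E3} (hp : p ∈ P') (hb : b ∈ phat P) (hc : c ∈ phat P)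
    (hbp : clP P b ≠ p) (hcp : clP P c ≠ p) (hcb : clP P c ≠ clP P b)
    (hx1 : x ∈ halfCircle p (v p)) (hx2 : x ∈ arc b c) :
    x ∉ ({p, -p} : Set E3) ∧ x ∉ ({b, c} : Set E3) := by
  have hxbc : x ∈ Submodule.span ℝ ({b, c} : Set E3) := arc_subset_span hx2
  have hxU : x ∈ Submodule.span ℝ ({p, v p} : Set E3) := halfCircle_subset_span hx1
  have hli : LinearIndependent ℝ ![p, b, c] :=
    C.li3phat (C.mem_phat_of_mem (C.hP' hp)) hb hc
      (by rw [C.clP_P' hp]; exact hbp) (by rw [C.clP_P' hp]; exact hcp) hcb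
  constructor
  · rintro (rfl | h)
    · exact not_mem_span_pair hli hxbc
    · rw [Set.mem_singleton_iff] at h
      have : p ∈ Submodule.span ℝ ({b, c} : Set E3) := by
        have hp2 : p = -x := by rw [h, neg_neg]
        rw [hp2]; exact Submodule.neg_mem _ hxbc
      exact not_mem_span_pair hli this
  · rintro (rfl | h)
    · rcases C.hgc' hp hb hxU with h1 | h1
      · exact hbp (by rw [h1, C.clP_P' hp])
      · exact hbp (by rw [h1, C.clP_neg (C.mem_phat_of_mem (C.hP' hp)), C.clP_P' hp])
    · rw [Set.mem_singleton_iff] at h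
      rw [h] at hxU
      rcases C.hgc' hp hc hxU with h1 | h1
      · exact hcp (by rw [h1, C.clP_P' hp])
      · exact hcp (by rw [h1, C.clP_neg (C.mem_phat_of_mem (C.hP' hp)), C.clP_P' hp])

/-- Common points of two half-circles are not endpoints. -/
lemma HH_nonendpoint {p q z : E3} (hp : p ∈ P') (hq : q ∈ P') (hpq : p ≠ q)
    (hz1 : z ∈ halfCircle p (v p)) (hz2 : z ∈ halfCircle q (v q)) :
    z ∉ ({p, -p} : Set E3) ∧ z ∉ ({q, -q} : Set E3) := by
  have hzU : z ∈ Submodule.span ℝ ({p, v p} : Set E3) := halfCircle_subset_span hz1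
  have hzW : z ∈ Submodule.span ℝ ({q, v q} : Set E3) := halfCircle_subset_span hz2
  have key : ∀ r w : E3, r ∈ P' → w ∈ P' → r ≠ w → z ∈ Submodule.span ℝ ({w, v w} : Set E3) →
      z ∉ ({r, -r} : Set E3) := by
    intro r w hr hw hrw hspan hmem
    have hrm : r ∈ phat P := C.mem_phat_of_mem (C.hP' hr)
    simp only [Set.mem_insert_iff, Set.mem_singleton_iff] at hmem
    rcases hmem with h | h
    · rw [h] at hspan
      rcases C.hgc' hw hrm hspan with h1 | h1
      · exact hrw h1
      · exact C.no_antip (C.hP' hw) (C.hP' (h1 ▸ hr))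
    · rw [h] at hspan
      rcases C.hgc' hw (C.neg_mem_phat hrm) hspan with h1 | h1
      · have h2 : r = -w := by rw [← neg_neg r, h1]
        exact C.no_antip (C.hP' hw) (C.hP' (h2 ▸ hr))
      · have h2 : r = w := by rw [← neg_neg r, h1, neg_neg]
        exact hrw h2
  exact ⟨key p q hp hq hpq hzW, key q p hq hp (Ne.symm hpq) hzU⟩

end Good
end PartB4

section PartC1

open Classical in
def phatF (F : Finset E3) : Finset E3 := F ∪ F.image (fun x => -x)

lemma mem_phatF {P : Set E3} {F : Finset E3} (hF : (F : Set E3) = P) {a : E3} :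
    a ∈ phatF F ↔ a ∈ phat P := by
  have hmem : ∀ x : E3, x ∈ F ↔ x ∈ P := by
    intro x; rw [← hF]; simp
  unfold phatF phat
  simp only [Finset.mem_union, Finset.mem_image, Set.mem_union, Set.mem_image, hmem]

open Classical in
def Q4 (F : Finset E3) : Finset ((E3 × E3) × E3 × E3) :=
  F.offDiag.biUnion (fun w => ((F.erase w.1).erase w.2).offDiag.image (fun z => (w, z)))

lemma mem_Q4 {F : Finset E3} {q : (E3 × E3) × E3 × E3} :
    q ∈ Q4 F ↔ q.1.1 ∈ F ∧ q.1.2 ∈ F ∧ q.2.1 ∈ F ∧ q.2.2 ∈ F ∧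
      q.1.2 ≠ q.1.1 ∧ q.2.1 ≠ q.1.1 ∧ q.2.1 ≠ q.1.2 ∧ q.2.2 ≠ q.1.1 ∧
      q.2.2 ≠ q.1.2 ∧ q.2.2 ≠ q.2.1 := by
  obtain ⟨⟨a, b⟩, c, d⟩ := q
  simp only [Q4, Finset.mem_biUnion, Finset.mem_offDiag, Finset.mem_image,
    Finset.mem_erase, Prod.mk.injEq]
  constructor
  · rintro ⟨⟨a', b'⟩, ⟨ha', hb', hab'⟩, ⟨⟨c', d'⟩, ⟨⟨hc1, hc2, hc3⟩, ⟨hd1, hd2, hd3⟩, hcd⟩,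
      heq1, heq2⟩⟩
    obtain ⟨rfl, rfl⟩ := heq1
    obtain ⟨rfl, rfl⟩ := heq2
    exact ⟨ha', hb', hc3, hd3, fun h => hab' h.symm, hc2, hc1, hd2, hd1, fun h => hcd h.symm⟩
  · rintro ⟨h1, h2, h3, h4, h5, h6, h7, h8, h9, h10⟩
    exact ⟨(a, b), ⟨h1, h2, fun h => h5 h.symm⟩, ⟨(c, d),
      ⟨⟨h7, h6, h3⟩, ⟨h9, h8, h4⟩, fun h => h10 h.symm⟩, by simp⟩⟩

lemma card_Q4 {F : Finset E3} :
    (Q4 F).card = (F.card * F.card - F.card) *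
      ((F.card - 2) * (F.card - 2) - (F.card - 2)) := by
  classical
  rw [Q4, Finset.card_biUnion]
  · rw [Finset.sum_congr rfl
      (g := fun _ => (F.card - 2) * (F.card - 2) - (F.card - 2)) ?_,
      Finset.sum_const, smul_eq_mul, Finset.offDiag_card]
    intro w hw
    rw [Finset.mem_offDiag] at hw
    obtain ⟨hw1, hw2, hw12⟩ := hw
    rw [Finset.card_image_of_injective _ (fun z1 z2 h => (Prod.ext_iff.1 h).2),
      Finset.offDiag_card, Finset.card_erase_of_mem
        (Finset.mem_erase.2 ⟨fun h => hw12 h.symm, hw2⟩),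
      Finset.card_erase_of_mem hw1]
    have h2 : F.card - 1 - 1 = F.card - 2 := by omega
    rw [h2]
  · intro x hx y hy hxy
    simp only [Function.onFun]
    rw [Finset.disjoint_left]
    intro z hz1 hz2
    simp only [Finset.mem_image] at hz1 hz2
    obtain ⟨z1, -, rfl⟩ := hz1
    obtain ⟨z2, -, heq⟩ := hz2
    exact hxy ((Prod.ext_iff.1 heq).1.symm)

end PartC1

section PartC2
open scoped Classical

open Classical in
def DAA (P : Set E3) (F : Finset E3) : Finset ((E3 × E3) × E3 × E3) :=
  ((phatF F ×ˢ phatF F) ×ˢ phatF F ×ˢ phatF F).filter (fun q =>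
    clP P q.1.2 ≠ clP P q.1.1 ∧ clP P q.2.1 ≠ clP P q.1.1 ∧ clP P q.2.1 ≠ clP P q.1.2 ∧
    clP P q.2.2 ≠ clP P q.1.1 ∧ clP P q.2.2 ≠ clP P q.1.2 ∧ clP P q.2.2 ≠ clP P q.2.1 ∧
    (arc q.1.1 q.1.2 ∩ arc q.2.1 q.2.2).Nonempty)

def clmap4 (P : Set E3) : ((E3 × E3) × E3 × E3) → ((E3 × E3) × E3 × E3) :=
  fun q => ((clP P q.1.1, clP P q.1.2), clP P q.2.1, clP P q.2.2)

def neg4 : ((E3 × E3) × E3 × E3) → ((E3 × E3) × E3 × E3) :=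
  fun q => ((-q.1.1, -q.1.2), -q.2.1, -q.2.2)

def FF1 : ((E3 × E3) × E3 × E3) → Sym2 E3 × (E3 × E3) := fun q => (s(q.1.1, q.1.2), q.2)

def FF2 : Sym2 E3 × (E3 × E3) → Sym2 E3 × Sym2 E3 := fun w => (w.1, s(w.2.1, w.2.2))

def curveOf : Sym2 E3 → Curve :=
  Sym2.lift ⟨fun a b => (arc a b, ({a, b} : Set E3)), fun a b => by
    dsimp only; rw [arc_comm, Set.pair_comm]⟩

def FF3 : Sym2 E3 × Sym2 E3 → Sym2 Curve := fun w => s(curveOf w.1, curveOf w.2)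

lemma curveOf_pair (a b : E3) : curveOf s(a, b) = (arc a b, ({a, b} : Set E3)) := by
  simp [curveOf]

lemma curveOf_inj {a b a' b' : E3} (hab : b ≠ a) (h : curveOf s(a', b') = curveOf s(a, b)) :
    s(a', b') = s(a, b) := by
  rw [curveOf_pair, curveOf_pair] at h
  have h2 : ({a', b'} : Set E3) = {a, b} := congrArg Prod.snd h
  rw [Set.pair_eq_pair_iff] at h2
  rw [Sym2.eq_iff]
  tauto

namespace Good

variable {k : ℕ} {P P' : Set E3} {v : E3 → E3} (C : Good k P P' v)
include C

lemma mem_DAA {F : Finset E3} (hF : (F : Set E3) = P) {q : (E3 × E3) × E3 × E3} :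
    q ∈ DAA P F ↔ (q.1.1 ∈ phat P ∧ q.1.2 ∈ phat P ∧ q.2.1 ∈ phat P ∧ q.2.2 ∈ phat P) ∧
      (clP P q.1.2 ≠ clP P q.1.1 ∧ clP P q.2.1 ≠ clP P q.1.1 ∧ clP P q.2.1 ≠ clP P q.1.2 ∧
       clP P q.2.2 ≠ clP P q.1.1 ∧ clP P q.2.2 ≠ clP P q.1.2 ∧ clP P q.2.2 ≠ clP P q.2.1) ∧
      (arc q.1.1 q.1.2 ∩ arc q.2.1 q.2.2).Nonempty := by
  unfold DAA
  simp only [Finset.mem_filter, Finset.mem_product, mem_phatF hF]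
  tauto

lemma DAA_swap1 {F : Finset E3} (hF : (F : Set E3) = P) {q : (E3 × E3) × E3 × E3}
    (hq : q ∈ DAA P F) : ((q.1.2, q.1.1), q.2) ∈ DAA P F := by
  rw [C.mem_DAA hF] at hq ⊢
  obtain ⟨⟨m1, m2, m3, m4⟩, ⟨c1, c2, c3, c4, c5, c6⟩, ⟨x, hx1, hx2⟩⟩ := hq
  refine ⟨⟨m2, m1, m3, m4⟩, ⟨c1.symm, c3, c2, c5, c4, c6⟩, ⟨x, ?_, hx2⟩⟩
  rw [arc_comm]; exact hx1

lemma DAA_swap2 {F : Finset E3} (hF : (F : Set E3) = P) {q : (E3 × E3) × E3 × E3}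
    (hq : q ∈ DAA P F) : (q.1, (q.2.2, q.2.1)) ∈ DAA P F := by
  rw [C.mem_DAA hF] at hq ⊢
  obtain ⟨⟨m1, m2, m3, m4⟩, ⟨c1, c2, c3, c4, c5, c6⟩, ⟨x, hx1, hx2⟩⟩ := hq
  refine ⟨⟨m1, m2, m4, m3⟩, ⟨c1, c4, c5, c2, c3, c6.symm⟩, ⟨x, hx1, ?_⟩⟩
  rw [arc_comm]; exact hx2

lemma DAA_swap12 {F : Finset E3} (hF : (F : Set E3) = P) {q : (E3 × E3) × E3 × E3}
    (hq : q ∈ DAA P F) : (q.2, q.1) ∈ DAA P F := by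
  rw [C.mem_DAA hF] at hq ⊢
  obtain ⟨⟨m1, m2, m3, m4⟩, ⟨c1, c2, c3, c4, c5, c6⟩, ⟨x, hx1, hx2⟩⟩ := hq
  exact ⟨⟨m3, m4, m1, m2⟩, ⟨c6, c2.symm, c4.symm, c3.symm, c5.symm, c1⟩, ⟨x, hx2, hx1⟩⟩

lemma DAA_image_cl {F : Finset E3} (hF : (F : Set E3) = P) :
    (DAA P F).image (clmap4 P) = Q4 F := by
  classical
  have hFP : ∀ x : E3, x ∈ F ↔ x ∈ P := fun x => by rw [← hF]; simp
  ext q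
  rw [Finset.mem_image, mem_Q4]
  constructor
  · rintro ⟨T, hT, rfl⟩
    rw [C.mem_DAA hF] at hT
    obtain ⟨⟨m1, m2, m3, m4⟩, ⟨c1, c2, c3, c4, c5, c6⟩, -⟩ := hT
    exact ⟨(hFP _).2 (C.clP_mem m1), (hFP _).2 (C.clP_mem m2), (hFP _).2 (C.clP_mem m3),
      (hFP _).2 (C.clP_mem m4), c1, c2, c3, c4, c5, c6⟩
  · rintro ⟨h1, h2, h3, h4, h5, h6, h7, h8, h9, h10⟩
    obtain ⟨a, b, c, d, x, ma, mb, mc, md, ca, cb, cc, cd, hx1, hx2⟩ :=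
      C.AA_exists ((hFP _).1 h1) ((hFP _).1 h2) ((hFP _).1 h3) ((hFP _).1 h4)
        h5 h6 h7 h8 h9 h10
    refine ⟨((a, b), c, d), ?_, ?_⟩
    · rw [C.mem_DAA hF]
      exact ⟨⟨ma, mb, mc, md⟩, by
        simp only []
        rw [ca, cb, cc, cd]
        exact ⟨h5, h6, h7, h8, h9, h10⟩, ⟨x, hx1, hx2⟩⟩
    · unfold clmap4
      simp only []
      rw [ca, cb, cc, cd]

lemma card_DAA {F : Finset E3} (hF : (F : Set E3) = P) :
    (Q4 F).card * 2 = (DAA P F).card := by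
  classical
  rw [← C.DAA_image_cl hF]
  apply two_to_one _ _ neg4
  · intro T hT
    rw [C.mem_DAA hF] at hT ⊢
    obtain ⟨⟨m1, m2, m3, m4⟩, ⟨c1, c2, c3, c4, c5, c6⟩, ⟨x, hx1, hx2⟩⟩ := hT
    refine ⟨⟨C.neg_mem_phat m1, C.neg_mem_phat m2, C.neg_mem_phat m3, C.neg_mem_phat m4⟩, ?_,
      ⟨-x, neg_mem_arc_neg hx1, neg_mem_arc_neg hx2⟩⟩
    unfold neg4
    simp only []
    rw [C.clP_neg m1, C.clP_neg m2, C.clP_neg m3, C.clP_neg m4]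
    exact ⟨c1, c2, c3, c4, c5, c6⟩
  · intro T hT heq
    rw [C.mem_DAA hF] at hT
    have h1 : -T.1.1 = T.1.1 := by
      have := congrArg (fun z => z.1.1) heq
      exact this
    have hu := C.phat_unit hT.1.1
    exact unit_ne_neg hu h1.symm
  · intro T hT
    rw [C.mem_DAA hF] at hT
    obtain ⟨⟨m1, m2, m3, m4⟩, -, -⟩ := hT
    unfold clmap4 neg4
    simp only []
    rw [C.clP_neg m1, C.clP_neg m2, C.clP_neg m3, C.clP_neg m4]
  · intro T hT T' hT'
    intro heq
    obtain ⟨⟨a, b⟩, c, d⟩ := T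
    obtain ⟨⟨a', b'⟩, c', d'⟩ := T'
    rw [C.mem_DAA hF] at hT hT'
    obtain ⟨⟨m1, m2, m3, m4⟩, ⟨c1, c2, c3, c4, c5, c6⟩, ⟨x, hx1, hx2⟩⟩ := hT
    obtain ⟨⟨m1', m2', m3', m4'⟩, -, ⟨x', hx1', hx2'⟩⟩ := hT'
    unfold clmap4 at heq
    simp only [Prod.mk.injEq] at heq
    obtain ⟨⟨e1, e2⟩, e3, e4⟩ := heq
    rcases C.AA_fiber m1 m2 m3 m4 m1' m2' m3' m4' c1 c2 c3 c4 c5 c6 e1 e2 e3 e4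
      hx1 hx2 hx1' hx2' with ⟨g1, g2, g3, g4⟩ | ⟨g1, g2, g3, g4⟩
    · left; exact Prod.ext (Prod.ext g1 g2) (Prod.ext g3 g4)
    · right; exact Prod.ext (Prod.ext g1 g2) (Prod.ext g3 g4)

end Good
end PartC2

section PartC2b
open scoped Classical

def ArcCurve (P : Set E3) (c : Curve) : Prop :=
  ∃ a b : E3, a ∈ phat P ∧ b ∈ phat P ∧ b ≠ a ∧ b ≠ -a ∧
    c = (arc a b, ({a, b} : Set E3))

def HCurve (P' : Set E3) (v : E3 → E3) (c : Curve) : Prop :=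
  ∃ p ∈ P', c = (halfCircle p (v p), ({p, -p} : Set E3))

lemma mem_drawing {P P' : Set E3} {v : E3 → E3} {c : Curve} :
    c ∈ drawingCurves P v P' ↔ ArcCurve P c ∨ HCurve P' v c := Iff.rfl

def AAset (P P' : Set E3) (v : E3 → E3) : Set (Sym2 Curve) :=
  {pr | pr ∈ crossingPairs (drawingCurves P v P') ∧
    ∃ c d : Curve, pr = s(c, d) ∧ ArcCurve P c ∧ ArcCurve P d}

def AHset (P P' : Set E3) (v : E3 → E3) : Set (Sym2 Curve) :=
  {pr | pr ∈ crossingPairs (drawingCurves P v P') ∧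
    ∃ c d : Curve, pr = s(c, d) ∧ HCurve P' v c ∧ ArcCurve P d}

def HHset (P P' : Set E3) (v : E3 → E3) : Set (Sym2 Curve) :=
  {pr | pr ∈ crossingPairs (drawingCurves P v P') ∧
    ∃ c d : Curve, pr = s(c, d) ∧ HCurve P' v c ∧ HCurve P' v d}

def WAA (P : Set E3) (F : Finset E3) : Finset (Sym2 Curve) :=
  (((DAA P F).image FF1).image FF2).image FF3

namespace Good

variable {k : ℕ} {P P' : Set E3} {v : E3 → E3} (C : Good k P P' v)
include C

lemma cl_ne_of {a b : E3} (ha : a ∈ phat P) (hb : b ∈ phat P) (h1 : b ≠ a)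
    (h2 : b ≠ -a) : clP P b ≠ clP P a := fun h => by
  rcases (C.clP_eq_iff ha hb).1 h with h3 | h3
  · exact h1 h3
  · exact h2 h3

lemma card_W1 {F : Finset E3} (hF : (F : Set E3) = P) :
    ((DAA P F).image FF1).card * 2 = (DAA P F).card := by
  apply two_to_one _ _ (fun q => ((q.1.2, q.1.1), q.2))
  · intro T hT; exact C.DAA_swap1 hF hT
  · intro T hT heq
    rw [C.mem_DAA hF] at hT
    exact hT.2.1.1 (congrArg (fun z => clP P z.1.1) heq)
  · intro T _
    exact Prod.ext Sym2.eq_swap rfl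
  · intro T _ T' _ heq
    unfold FF1 at heq
    have h1 : s(T'.1.1, T'.1.2) = s(T.1.1, T.1.2) := (Prod.ext_iff.1 heq).1
    have h2 : T'.2 = T.2 := (Prod.ext_iff.1 heq).2
    rw [Sym2.eq_iff] at h1
    rcases h1 with ⟨e1, e2⟩ | ⟨e1, e2⟩
    · left; exact Prod.ext (Prod.ext e1 e2) h2
    · right; exact Prod.ext (Prod.ext e1 e2) h2

lemma card_W2 {F : Finset E3} (hF : (F : Set E3) = P) :
    (((DAA P F).image FF1).image FF2).card * 2 = ((DAA P F).image FF1).card := by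
  apply two_to_one _ _ (fun w => (w.1, (w.2.2, w.2.1)))
  · intro w hw
    rw [Finset.mem_image] at hw ⊢
    obtain ⟨T, hT, rfl⟩ := hw
    exact ⟨(T.1, (T.2.2, T.2.1)), C.DAA_swap2 hF hT, rfl⟩
  · intro w hw heq
    rw [Finset.mem_image] at hw
    obtain ⟨T, hT, rfl⟩ := hw
    rw [C.mem_DAA hF] at hT
    exact hT.2.1.2.2.2.2.2 (congrArg (fun z => clP P z.2.1) heq)
  · intro w _
    exact Prod.ext rfl Sym2.eq_swap
  · intro w _ w' _ heq
    unfold FF2 at heq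
    have h1 : w'.1 = w.1 := (Prod.ext_iff.1 heq).1
    have h2 : s(w'.2.1, w'.2.2) = s(w.2.1, w.2.2) := (Prod.ext_iff.1 heq).2
    rw [Sym2.eq_iff] at h2
    rcases h2 with ⟨e1, e2⟩ | ⟨e1, e2⟩
    · left; exact Prod.ext h1 (Prod.ext e1 e2)
    · right; exact Prod.ext h1 (Prod.ext e1 e2)

lemma card_W3 {F : Finset E3} (hF : (F : Set E3) = P) :
    (WAA P F).card * 2 = (((DAA P F).image FF1).image FF2).card := by
  apply two_to_one _ _ Prod.swap
  · intro w hw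
    rw [Finset.mem_image] at hw ⊢
    obtain ⟨w1, hw1, rfl⟩ := hw
    rw [Finset.mem_image] at hw1
    obtain ⟨T, hT, rfl⟩ := hw1
    exact ⟨FF1 (T.2, T.1), Finset.mem_image_of_mem _ (C.DAA_swap12 hF hT), rfl⟩
  · intro w hw heq
    rw [Finset.mem_image] at hw
    obtain ⟨w1, hw1, rfl⟩ := hw
    rw [Finset.mem_image] at hw1
    obtain ⟨T, hT, rfl⟩ := hw1
    rw [C.mem_DAA hF] at hT
    have h1 : s(T.2.1, T.2.2) = s(T.1.1, T.1.2) := (Prod.ext_iff.1 heq).1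
    rw [Sym2.eq_iff] at h1
    rcases h1 with ⟨e1, e2⟩ | ⟨e1, e2⟩
    · exact hT.2.1.2.1 (congrArg (clP P) e1)
    · exact hT.2.1.2.2.1 (congrArg (clP P) e1)
  · intro w _
    exact Sym2.eq_swap
  · intro w hw w' hw' heq
    rw [Finset.mem_image] at hw hw'
    obtain ⟨w1, hw1, rfl⟩ := hw
    obtain ⟨w1', hw1', rfl⟩ := hw'
    rw [Finset.mem_image] at hw1 hw1'
    obtain ⟨T, hT, rfl⟩ := hw1
    obtain ⟨T', hT', rfl⟩ := hw1'
    rw [C.mem_DAA hF] at hT hT'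
    unfold FF3 FF2 FF1 at heq
    rw [Sym2.eq_iff] at heq
    have hba : T.1.2 ≠ T.1.1 := fun h => hT.2.1.1 (congrArg (clP P) h)
    have hdc : T.2.2 ≠ T.2.1 := fun h => hT.2.1.2.2.2.2.2 (congrArg (clP P) h)
    rcases heq with ⟨e1, e2⟩ | ⟨e1, e2⟩
    · left
      exact Prod.ext (curveOf_inj hba e1) (curveOf_inj hdc e2)
    · right
      exact Prod.ext (curveOf_inj hdc e1) (curveOf_inj hba e2)

lemma card_WAA {F : Finset E3} (hF : (F : Set E3) = P) :
    (WAA P F).card * 4 = (Q4 F).card := by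
  have h1 := C.card_W1 hF
  have h2 := C.card_W2 hF
  have h3 := C.card_W3 hF
  have h4 := C.card_DAA hF
  omega

lemma AAset_eq {F : Finset E3} (hF : (F : Set E3) = P) :
    AAset P P' v = (WAA P F : Set (Sym2 Curve)) := by
  ext pr
  constructor
  · rintro ⟨hcp, c0, d0, hpr, hc0, hd0⟩
    obtain ⟨c1, hc1D, d1, hd1D, hne, ⟨x, hxc, hxd, hxe1, hxe2⟩, hpr1⟩ := hcp
    have hsym : s(c0, d0) = s(c1, d1) := hpr.symm.trans hpr1
    rw [Sym2.eq_iff] at hsym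
    have harc : ArcCurve P c1 ∧ ArcCurve P d1 := by
      rcases hsym with ⟨e1, e2⟩ | ⟨e1, e2⟩
      · rw [← e1, ← e2]; exact ⟨hc0, hd0⟩
      · rw [← e1, ← e2]; exact ⟨hd0, hc0⟩
    obtain ⟨⟨a, b, ma, mb, hba, hbna, hc1e⟩, ⟨c, d, mc, md, hdc, hdnc, hd1e⟩⟩ := harc
    subst hc1e hd1e
    simp only [] at hxc hxd hxe1 hxe2
    have cb1 : clP P b ≠ clP P a := C.cl_ne_of ma mb hba hbna
    have cdc : clP P d ≠ clP P c := C.cl_ne_of mc md hdc hdnc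
    have hsetne : ({a, b} : Set E3) ≠ ({c, d} : Set E3) := by
      intro h
      apply hne
      rcases Set.pair_eq_pair_iff.1 h with ⟨e1, e2⟩ | ⟨e1, e2⟩
      · rw [e1, e2]
      · rw [e1, e2, arc_comm, Set.pair_comm]
    have hca : clP P c ≠ clP P a := by
      intro h
      exact C.shared_no_cross ma mb mc md cb1 cdc h hsetne hxc hxd hxe1 hxe2
    have hda : clP P d ≠ clP P a := by
      intro h
      refine C.shared_no_cross (x := x) ma mb md mc cb1 cdc.symm h ?_ hxc ?_ hxe1 ?_
      · rw [Set.pair_comm d c]; exact hsetne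
      · rw [arc_comm]; exact hxd
      · rw [Set.pair_comm d c]; exact hxe2
    have hcb : clP P c ≠ clP P b := by
      intro h
      refine C.shared_no_cross (x := x) mb ma mc md cb1.symm cdc h ?_ ?_ hxd ?_ hxe2
      · rw [Set.pair_comm b a]; exact hsetne
      · rw [arc_comm]; exact hxc
      · rw [Set.pair_comm b a]; exact hxe1
    have hdb : clP P d ≠ clP P b := by
      intro h
      refine C.shared_no_cross (x := x) mb ma md mc cb1.symm cdc.symm h ?_ ?_ ?_ ?_ ?_
      · rw [Set.pair_comm b a, Set.pair_comm d c]; exact hsetne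
      · rw [arc_comm]; exact hxc
      · rw [arc_comm]; exact hxd
      · rw [Set.pair_comm b a]; exact hxe1
      · rw [Set.pair_comm d c]; exact hxe2
    have hT : ((a, b), c, d) ∈ DAA P F := by
      rw [C.mem_DAA hF]
      exact ⟨⟨ma, mb, mc, md⟩, ⟨cb1, hca, hcb, hda, hdb, cdc⟩, ⟨x, hxc, hxd⟩⟩
    rw [Finset.mem_coe]
    unfold WAA
    refine Finset.mem_image.2 ⟨FF2 (FF1 ((a, b), c, d)),
      Finset.mem_image_of_mem _ (Finset.mem_image_of_mem _ hT), ?_⟩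
    unfold FF3 FF2 FF1
    simp only []
    rw [curveOf_pair, curveOf_pair]
    exact hpr1.symm
  · intro hz
    rw [Finset.mem_coe] at hz
    unfold WAA at hz
    obtain ⟨w2, hw2, rfl⟩ := Finset.mem_image.1 hz
    obtain ⟨w1, hw1, rfl⟩ := Finset.mem_image.1 hw2
    obtain ⟨T, hT, rfl⟩ := Finset.mem_image.1 hw1
    obtain ⟨⟨a, b⟩, c, d⟩ := T
    rw [C.mem_DAA hF] at hT
    obtain ⟨⟨ma, mb, mc, md⟩, ⟨c1, c2, c3, c4, c5, c6⟩, ⟨x, hx1, hx2⟩⟩ := hT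
    simp only [] at ma mb mc md c1 c2 c3 c4 c5 c6 hx1 hx2
    have hba := C.cl_ne_imp ma mb c1
    have hdc := C.cl_ne_imp mc md c6
    have hc1D : (arc a b, ({a, b} : Set E3)) ∈ drawingCurves P v P' :=
      Or.inl ⟨a, b, ma, mb, hba.1, hba.2, rfl⟩
    have hd1D : (arc c d, ({c, d} : Set E3)) ∈ drawingCurves P v P' :=
      Or.inl ⟨c, d, mc, md, hdc.1, hdc.2, rfl⟩
    have hne : (arc a b, ({a, b} : Set E3)) ≠ (arc c d, ({c, d} : Set E3)) := by
      intro h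
      have h2 : ({a, b} : Set E3) = {c, d} := congrArg Prod.snd h
      rcases Set.pair_eq_pair_iff.1 h2 with ⟨e1, e2⟩ | ⟨e1, e2⟩
      · exact c2 (congrArg (clP P) e1.symm)
      · exact c4 (congrArg (clP P) e1.symm)
    obtain ⟨hxe1, hxe2⟩ := C.AA_nonendpoint ma mb mc md c1 c2 c3 c4 c5 c6 hx1 hx2
    constructor
    · refine ⟨(arc a b, ({a, b} : Set E3)), hc1D, (arc c d, ({c, d} : Set E3)), hd1D, hne,
        ⟨x, hx1, hx2, hxe1, hxe2⟩, ?_⟩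
      unfold FF3 FF2 FF1
      simp only []
      rw [curveOf_pair, curveOf_pair]
    · refine ⟨(arc a b, ({a, b} : Set E3)), (arc c d, ({c, d} : Set E3)), ?_,
        ⟨a, b, ma, mb, hba.1, hba.2, rfl⟩, ⟨c, d, mc, md, hdc.1, hdc.2, rfl⟩⟩
      unfold FF3 FF2 FF1
      simp only []
      rw [curveOf_pair, curveOf_pair]

end Good
end PartC2b

section PartC3
open scoped Classical

def DpH (P : Set E3) (v : E3 → E3) (F : Finset E3) (p : E3) : Finset (E3 × E3) :=
  (phatF F ×ˢ phatF F).filter (fun w =>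
    clP P w.1 ≠ p ∧ clP P w.2 ≠ p ∧ clP P w.2 ≠ clP P w.1 ∧
    (halfCircle p (v p) ∩ arc w.1 w.2).Nonempty)

def DAH (P : Set E3) (v : E3 → E3) (F F' : Finset E3) : Finset (E3 × E3 × E3) :=
  F'.biUnion (fun p => (DpH P v F p).image (fun w => (p, w.1, w.2)))

def gAH (v : E3 → E3) : E3 × E3 × E3 → Sym2 Curve := fun q =>
  s((halfCircle q.1 (v q.1), ({q.1, -q.1} : Set E3)),
    (arc q.2.1 q.2.2, ({q.2.1, q.2.2} : Set E3)))

def WAH (P : Set E3) (v : E3 → E3) (F F' : Finset E3) : Finset (Sym2 Curve) :=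
  (DAH P v F F').image (gAH v)

namespace Good

variable {k : ℕ} {P P' : Set E3} {v : E3 → E3} (C : Good k P P' v)
include C

lemma mem_DpH {F : Finset E3} (hF : (F : Set E3) = P) {p : E3} {w : E3 × E3} :
    w ∈ DpH P v F p ↔ (w.1 ∈ phat P ∧ w.2 ∈ phat P) ∧
      (clP P w.1 ≠ p ∧ clP P w.2 ≠ p ∧ clP P w.2 ≠ clP P w.1) ∧
      (halfCircle p (v p) ∩ arc w.1 w.2).Nonempty := by
  unfold DpH
  simp only [Finset.mem_filter, Finset.mem_product, mem_phatF hF]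
  tauto

lemma mem_DAH {F F' : Finset E3} (hF : (F : Set E3) = P) (hF' : (F' : Set E3) = P')
    {q : E3 × E3 × E3} :
    q ∈ DAH P v F F' ↔ q.1 ∈ P' ∧ (q.2.1, q.2.2) ∈ DpH P v F q.1 := by
  have hmem : ∀ x : E3, x ∈ F' ↔ x ∈ P' := fun x => by rw [← hF']; simp
  unfold DAH
  rw [Finset.mem_biUnion]
  constructor
  · rintro ⟨p, hp, hq⟩
    rw [Finset.mem_image] at hq
    obtain ⟨w, hw, rfl⟩ := hq
    exact ⟨(hmem p).1 hp, hw⟩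
  · rintro ⟨h1, h2⟩
    exact ⟨q.1, (hmem q.1).2 h1, Finset.mem_image.2 ⟨(q.2.1, q.2.2), h2, rfl⟩⟩

/-- no crossing between a half-circle and an arc with an endpoint over the same class -/
lemma AH_shared {p b c x : E3} (hp : p ∈ P') (hb : b ∈ phat P) (hc : c ∈ phat P)
    (hcb : clP P c ≠ clP P b) (hclb : clP P b = p)
    (hx1 : x ∈ halfCircle p (v p)) (hx2 : x ∈ arc b c)
    (hxep : x ∉ ({p, -p} : Set E3)) : False := by
  have hpm : p ∈ phat P := C.mem_phat_of_mem (C.hP' hp)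
  have hbsgn : b = p ∨ b = -p := by
    have := (C.clP_eq_iff hpm hb).1 (by rw [hclb, C.clP_P' hp])
    exact this
  have hcp : clP P c ≠ p := fun h2 => hcb (h2.trans hclb.symm)
  have hne : Submodule.span ℝ ({p, v p} : Set E3) ≠ Submodule.span ℝ ({b, c} : Set E3) := by
    intro heq
    have hcmem : c ∈ Submodule.span ℝ ({p, v p} : Set E3) := by
      rw [heq]; exact Submodule.subset_span (Set.mem_insert_of_mem _ rfl)
    rcases C.hgc' hp hc hcmem with h1 | h1
    · exact hcp (by rw [h1, C.clP_P' hp])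
    · exact hcp (by rw [h1, C.clP_neg hpm, C.clP_P' hp])
  have li_bc := C.li2phat hb hc hcb
  obtain ⟨x₀, hx₀u, hx₀U, hx₀W, huniq⟩ := planes_sphere_inter (C.li_pv hp) li_bc hne
  have hpW : p ∈ Submodule.span ℝ ({b, c} : Set E3) := by
    rcases hbsgn with h | h
    · rw [← h]; exact Submodule.subset_span (Set.mem_insert _ _)
    · have : p = -b := by rw [h, neg_neg]
      rw [this]
      exact Submodule.neg_mem _ (Submodule.subset_span (Set.mem_insert _ _))
  have hpU : p ∈ Submodule.span ℝ ({p, v p} : Set E3) :=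
    Submodule.subset_span (Set.mem_insert _ _)
  have hpcase := huniq p (C.hv1 hp) hpU hpW
  have hxcase := huniq x (C.H_unit hp hx1) (halfCircle_subset_span hx1) (arc_subset_span hx2)
  apply hxep
  rcases hpcase with h | h <;> rcases hxcase with h' | h'
  · left; rw [h', ← h]
  · right; rw [Set.mem_singleton_iff, h', h]
  · right; rw [Set.mem_singleton_iff, h', h, neg_neg]
  · left; rw [h', ← h]

lemma DpH_image_cl {F : Finset E3} (hF : (F : Set E3) = P) {p : E3} (hp : p ∈ P') :
    (DpH P v F p).image (fun w => (clP P w.1, clP P w.2)) = (F.erase p).offDiag := by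
  have hFP : ∀ x : E3, x ∈ F ↔ x ∈ P := fun x => by rw [← hF]; simp
  ext w
  rw [Finset.mem_image, Finset.mem_offDiag]
  constructor
  · rintro ⟨u, hu, rfl⟩
    rw [C.mem_DpH hF] at hu
    obtain ⟨⟨m1, m2⟩, ⟨c1, c2, c3⟩, -⟩ := hu
    exact ⟨Finset.mem_erase.2 ⟨c1, (hFP _).2 (C.clP_mem m1)⟩,
      Finset.mem_erase.2 ⟨c2, (hFP _).2 (C.clP_mem m2)⟩, fun h => c3 h.symm⟩
  · rintro ⟨h1, h2, h3⟩
    rw [Finset.mem_erase] at h1 h2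
    obtain ⟨b, c, x, mb, mc, cb, cc, hx1, hx2⟩ :=
      C.AH_exists hp ((hFP _).1 h1.2) ((hFP _).1 h2.2) h1.1 h2.1 (fun h => h3 h.symm)
    refine ⟨(b, c), ?_, by simp only []; rw [cb, cc]⟩
    rw [C.mem_DpH hF]
    refine ⟨⟨mb, mc⟩, ?_, ⟨x, hx1, hx2⟩⟩
    simp only []
    rw [cb, cc]
    exact ⟨h1.1, h2.1, fun h => h3 h.symm⟩

lemma card_DpH {F : Finset E3} (hF : (F : Set E3) = P) {p : E3} (hp : p ∈ P') :
    (DpH P v F p).card = (F.erase p).offDiag.card := by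
  rw [← C.DpH_image_cl hF hp]
  refine (Finset.card_image_of_injOn ?_).symm
  intro w hw w' hw' heq
  rw [Finset.mem_coe, C.mem_DpH hF] at hw hw'
  obtain ⟨⟨m1, m2⟩, ⟨c1, c2, c3⟩, ⟨x, hx1, hx2⟩⟩ := hw
  obtain ⟨⟨m1', m2'⟩, -, ⟨x', hx1', hx2'⟩⟩ := hw'
  have e1 : clP P w'.1 = clP P w.1 := (Prod.ext_iff.1 heq).1.symm
  have e2 : clP P w'.2 = clP P w.2 := (Prod.ext_iff.1 heq).2.symm
  obtain ⟨g1, g2⟩ := C.AH_fiber hp m1 m2 m1' m2' c1 c2 c3 e1 e2 hx1 hx2 hx1' hx2'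
  exact (Prod.ext g1 g2).symm

lemma card_DAH {F F' : Finset E3} (hF : (F : Set E3) = P) (hF' : (F' : Set E3) = P') :
    (DAH P v F F').card = F'.card * ((F.card - 1) * (F.card - 1) - (F.card - 1)) := by
  have hmem : ∀ x : E3, x ∈ F' ↔ x ∈ P' := fun x => by rw [← hF']; simp
  unfold DAH
  rw [Finset.card_biUnion]
  · rw [Finset.sum_congr rfl (g := fun _ => (F.card - 1) * (F.card - 1) - (F.card - 1)) ?_,
      Finset.sum_const, smul_eq_mul]
    intro p hp
    rw [Finset.card_image_of_injective _ (fun w w' h => by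
      have h1 := (Prod.ext_iff.1 h).2
      exact Prod.ext (Prod.ext_iff.1 h1).1 (Prod.ext_iff.1 h1).2),
      C.card_DpH hF ((hmem p).1 hp), Finset.offDiag_card,
      Finset.card_erase_of_mem (by have : p ∈ P := C.hP' ((hmem p).1 hp); rw [← hF] at this; simpa using this)]
  · intro x hx y hy hxy
    simp only [Function.onFun]
    rw [Finset.disjoint_left]
    intro z hz1 hz2
    rw [Finset.mem_image] at hz1 hz2
    obtain ⟨w1, -, rfl⟩ := hz1
    obtain ⟨w2, -, heq⟩ := hz2
    exact hxy (Prod.ext_iff.1 heq).1.symm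

end Good
end PartC3

section PartC3b
open scoped Classical
namespace Good

variable {k : ℕ} {P P' : Set E3} {v : E3 → E3} (C : Good k P P' v)
include C

lemma card_WAH {F F' : Finset E3} (hF : (F : Set E3) = P) (hF' : (F' : Set E3) = P') :
    (WAH P v F F').card * 2 = (DAH P v F F').card := by
  apply two_to_one _ _ (fun q => (q.1, q.2.2, q.2.1))
  · intro q hq
    rw [C.mem_DAH hF hF'] at hq ⊢
    obtain ⟨hp, hw⟩ := hq
    rw [C.mem_DpH hF] at hw ⊢
    obtain ⟨⟨m1, m2⟩, ⟨c1, c2, c3⟩, ⟨x, hx1, hx2⟩⟩ := hw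
    exact ⟨hp, ⟨m2, m1⟩, ⟨c2, c1, c3.symm⟩, ⟨x, hx1, by rw [arc_comm]; exact hx2⟩⟩
  · intro q hq heq
    rw [C.mem_DAH hF hF'] at hq
    obtain ⟨hp, hw⟩ := hq
    rw [C.mem_DpH hF] at hw
    have e : q.2.2 = q.2.1 := (Prod.ext_iff.1 (Prod.ext_iff.1 heq).2).1
    exact hw.2.1.2.2 (congrArg (clP P) e)
  · intro q _
    unfold gAH
    simp only []
    rw [arc_comm, Set.pair_comm q.2.1 q.2.2]
  · intro q hq q' hq' heq
    rw [C.mem_DAH hF hF'] at hq hq'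
    obtain ⟨hp, hw⟩ := hq
    obtain ⟨hp', hw'⟩ := hq'
    rw [C.mem_DpH hF] at hw hw'
    unfold gAH at heq
    rw [Sym2.eq_iff] at heq
    rcases heq with ⟨e1, e2⟩ | ⟨e1, e2⟩
    · -- aligned
      have hpp : ({q'.1, -q'.1} : Set E3) = {q.1, -q.1} := congrArg Prod.snd e1
      have hp1 : q'.1 = q.1 := by
        rcases Set.pair_eq_pair_iff.1 hpp with ⟨f1, f2⟩ | ⟨f1, f2⟩
        · exact f1
        · exfalso
          exact C.no_antip (C.hP' hp) (by rw [← f1]; exact C.hP' hp')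
      have hbc : ({q'.2.1, q'.2.2} : Set E3) = {q.2.1, q.2.2} := congrArg Prod.snd e2
      rcases Set.pair_eq_pair_iff.1 hbc with ⟨f1, f2⟩ | ⟨f1, f2⟩
      · left; exact Prod.ext hp1 (Prod.ext f1 f2)
      · right; exact Prod.ext hp1 (Prod.ext f1 f2)
    · -- crossed : impossible
      exfalso
      have hpp : ({q'.1, -q'.1} : Set E3) = {q.2.1, q.2.2} := congrArg Prod.snd e1
      rcases Set.pair_eq_pair_iff.1 hpp with ⟨f1, f2⟩ | ⟨f1, f2⟩
      · exact hw.2.1.2.2 (by rw [← f1, ← f2, C.clP_neg (C.mem_phat_of_mem (C.hP' hp'))])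
      · exact hw.2.1.2.2 (by rw [← f1, ← f2, C.clP_neg (C.mem_phat_of_mem (C.hP' hp'))])

lemma AHset_eq {F F' : Finset E3} (hF : (F : Set E3) = P) (hF' : (F' : Set E3) = P') :
    AHset P P' v = (WAH P v F F' : Set (Sym2 Curve)) := by
  ext pr
  constructor
  · rintro ⟨hcp, c0, d0, hpr, hH0, hA0⟩
    obtain ⟨c1, hc1D, d1, hd1D, hne, ⟨x, hxc, hxd, hxe1, hxe2⟩, hpr1⟩ := hcp
    have hsym : s(c0, d0) = s(c1, d1) := hpr.symm.trans hpr1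
    rw [Sym2.eq_iff] at hsym
    obtain ⟨h₁, a₁, hH, hA, hxh, hxa, hxeh, hxea, hpr2⟩ :
        ∃ h₁ a₁ : Curve, HCurve P' v h₁ ∧ ArcCurve P a₁ ∧ x ∈ h₁.1 ∧ x ∈ a₁.1 ∧
          x ∉ h₁.2 ∧ x ∉ a₁.2 ∧ pr = s(h₁, a₁) := by
      rcases hsym with ⟨e1, e2⟩ | ⟨e1, e2⟩
      · exact ⟨c1, d1, e1 ▸ hH0, e2 ▸ hA0, hxc, hxd, hxe1, hxe2, hpr1⟩
      · exact ⟨d1, c1, e1 ▸ hH0, e2 ▸ hA0, hxd, hxc, hxe2, hxe1, hpr1.trans Sym2.eq_swap⟩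
    obtain ⟨p, hp, rfl⟩ := hH
    obtain ⟨b, c, mb, mc, hcbne, hcnb, rfl⟩ := hA
    simp only [] at hxh hxa hxeh hxea
    have hcb : clP P c ≠ clP P b := C.cl_ne_of mb mc hcbne hcnb
    have hbp : clP P b ≠ p := by
      intro h
      exact C.AH_shared hp mb mc hcb h hxh hxa hxeh
    have hcp2 : clP P c ≠ p := by
      intro h
      exact C.AH_shared hp mc mb hcb.symm h hxh (by rw [arc_comm]; exact hxa) hxeh
    rw [Finset.mem_coe]
    unfold WAH
    refine Finset.mem_image.2 ⟨(p, b, c), ?_, ?_⟩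
    · rw [C.mem_DAH hF hF']
      exact ⟨hp, (C.mem_DpH hF).2 ⟨⟨mb, mc⟩, ⟨hbp, hcp2, hcb⟩, ⟨x, hxh, hxa⟩⟩⟩
    · unfold gAH
      simp only []
      exact hpr2.symm
  · intro hz
    rw [Finset.mem_coe] at hz
    unfold WAH at hz
    obtain ⟨q, hq, rfl⟩ := Finset.mem_image.1 hz
    obtain ⟨p, b, c⟩ := q
    rw [C.mem_DAH hF hF'] at hq
    obtain ⟨hp, hw⟩ := hq
    rw [C.mem_DpH hF] at hw
    obtain ⟨⟨mb, mc⟩, ⟨c1, c2, c3⟩, ⟨x, hx1, hx2⟩⟩ := hw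
    simp only [] at hp mb mc c1 c2 c3 hx1 hx2
    have hcb := C.cl_ne_imp mb mc c3
    have hH : (halfCircle p (v p), ({p, -p} : Set E3)) ∈ drawingCurves P v P' :=
      Or.inr ⟨p, hp, rfl⟩
    have hA : (arc b c, ({b, c} : Set E3)) ∈ drawingCurves P v P' :=
      Or.inl ⟨b, c, mb, mc, hcb.1, hcb.2, rfl⟩
    have hne : (halfCircle p (v p), ({p, -p} : Set E3)) ≠ (arc b c, ({b, c} : Set E3)) := by
      intro h
      have h2 : ({p, -p} : Set E3) = {b, c} := congrArg Prod.snd h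
      rcases Set.pair_eq_pair_iff.1 h2 with ⟨f1, f2⟩ | ⟨f1, f2⟩
      · exact c1 (by rw [← f1, C.clP_P' hp])
      · exact c1 (by rw [← f2, C.clP_neg (C.mem_phat_of_mem (C.hP' hp)), C.clP_P' hp])
    obtain ⟨hxe1, hxe2⟩ := C.AH_nonendpoint hp mb mc c1 c2 c3 hx1 hx2
    constructor
    · exact ⟨(halfCircle p (v p), ({p, -p} : Set E3)), hH, (arc b c, ({b, c} : Set E3)),
        hA, hne, ⟨x, hx1, hx2, hxe1, hxe2⟩, rfl⟩
    · exact ⟨(halfCircle p (v p), ({p, -p} : Set E3)), (arc b c, ({b, c} : Set E3)),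
        rfl, ⟨p, hp, rfl⟩, ⟨b, c, mb, mc, hcb.1, hcb.2, rfl⟩⟩

end Good
end PartC3b

section PartC4
open scoped Classical

def Sset (P' : Set E3) (v : E3 → E3) : Set (Sym2 E3) :=
  {pr : Sym2 E3 | ∃ p ∈ P', ∃ p' ∈ P', p ≠ p' ∧
    (halfCircle p (v p) ∩ halfCircle p' (v p')).Nonempty ∧ pr = s(p, p')}

def cHH (v : E3 → E3) (p : E3) : Curve := (halfCircle p (v p), ({p, -p} : Set E3))

namespace Good

variable {k : ℕ} {P P' : Set E3} {v : E3 → E3} (C : Good k P P' v)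
include C

lemma cHH_inj {a b : E3} (ha : a ∈ P) (hb : b ∈ P) (h : cHH v a = cHH v b) : a = b := by
  have h2 : ({a, -a} : Set E3) = {b, -b} := congrArg Prod.snd h
  rcases Set.pair_eq_pair_iff.1 h2 with ⟨f1, f2⟩ | ⟨f1, f2⟩
  · exact f1
  · exfalso
    exact C.no_antip hb (f1 ▸ ha)

lemma arc_not_h {c : Curve} (hA : ArcCurve P c) (hH : HCurve P' v c) : False := by
  obtain ⟨a, b, -, -, hba, hbna, rfl⟩ := hA
  obtain ⟨p, -, heq⟩ := hH
  have h2 : ({a, b} : Set E3) = {p, -p} := congrArg Prod.snd heq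
  rcases Set.pair_eq_pair_iff.1 h2 with ⟨f1, f2⟩ | ⟨f1, f2⟩
  · exact hbna (by rw [f2, f1])
  · exact hbna (by rw [f2, f1, neg_neg])

lemma HHset_eq : HHset P P' v = (Sym2.map (cHH v)) '' (Sset P' v) := by
  ext pr
  constructor
  · rintro ⟨hcp, c0, d0, hpr, hH0, hH0'⟩
    obtain ⟨c1, hc1D, d1, hd1D, hne, ⟨x, hxc, hxd, hxe1, hxe2⟩, hpr1⟩ := hcp
    have hsym : s(c0, d0) = s(c1, d1) := hpr.symm.trans hpr1
    rw [Sym2.eq_iff] at hsym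
    have hH1 : HCurve P' v c1 ∧ HCurve P' v d1 := by
      rcases hsym with ⟨e1, e2⟩ | ⟨e1, e2⟩
      · rw [← e1, ← e2]; exact ⟨hH0, hH0'⟩
      · rw [← e1, ← e2]; exact ⟨hH0', hH0⟩
    obtain ⟨⟨p, hp, rfl⟩, ⟨q, hq, rfl⟩⟩ := hH1
    have hpq : p ≠ q := by
      intro h
      subst h
      exact hne rfl
    refine ⟨s(p, q), ⟨p, hp, q, hq, hpq, ⟨x, hxc, hxd⟩, rfl⟩, ?_⟩
    rw [Sym2.map_pair_eq]
    exact hpr1.symm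
  · rintro ⟨z, ⟨p, hp, q, hq, hpq, ⟨x, hx1, hx2⟩, rfl⟩, rfl⟩
    rw [Sym2.map_pair_eq]
    have hH1 : (halfCircle p (v p), ({p, -p} : Set E3)) ∈ drawingCurves P v P' :=
      Or.inr ⟨p, hp, rfl⟩
    have hH2 : (halfCircle q (v q), ({q, -q} : Set E3)) ∈ drawingCurves P v P' :=
      Or.inr ⟨q, hq, rfl⟩
    have hne : cHH v p ≠ cHH v q := fun h => hpq (C.cHH_inj (C.hP' hp) (C.hP' hq) h)
    obtain ⟨he1, he2⟩ := C.HH_nonendpoint hp hq hpq hx1 hx2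
    exact ⟨⟨cHH v p, hH1, cHH v q, hH2, hne, ⟨x, hx1, hx2, he1, he2⟩, rfl⟩,
      cHH v p, cHH v q, rfl, ⟨p, hp, rfl⟩, ⟨q, hq, rfl⟩⟩

lemma ncard_HHset : (HHset P P' v).ncard = (Sset P' v).ncard := by
  rw [C.HHset_eq]
  apply Set.ncard_image_of_injOn
  rintro z ⟨p, hp, q, hq, hpq, -, rfl⟩ z' ⟨p', hp', q', hq', hpq', -, rfl⟩ heq
  rw [Sym2.map_pair_eq, Sym2.map_pair_eq, Sym2.eq_iff] at heq
  rw [Sym2.eq_iff]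
  rcases heq with ⟨e1, e2⟩ | ⟨e1, e2⟩
  · exact Or.inl ⟨C.cHH_inj (C.hP' hp) (C.hP' hp') e1, C.cHH_inj (C.hP' hq) (C.hP' hq') e2⟩
  · exact Or.inr ⟨C.cHH_inj (C.hP' hp) (C.hP' hq') e1, C.cHH_inj (C.hP' hq) (C.hP' hp') e2⟩

lemma Sset_finite : (Sset P' v).Finite := by
  have hP'fin : P'.Finite := C.hPfin.subset C.hP'
  apply Set.Finite.subset ((hP'fin.prod hP'fin).image (fun w : E3 × E3 => s(w.1, w.2)))
  rintro pr ⟨p, hp, q, hq, -, -, rfl⟩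
  exact ⟨(p, q), ⟨hp, hq⟩, rfl⟩

lemma cross_decomp :
    crossingPairs (drawingCurves P v P') = AAset P P' v ∪ AHset P P' v ∪ HHset P P' v := by
  ext pr
  constructor
  · intro hcp
    obtain ⟨c1, hc1D, d1, hd1D, hne, hx, hpr1⟩ := hcp
    have hcp' : pr ∈ crossingPairs (drawingCurves P v P') :=
      ⟨c1, hc1D, d1, hd1D, hne, hx, hpr1⟩
    rcases (mem_drawing.1 hc1D) with hc | hc <;> rcases (mem_drawing.1 hd1D) with hd | hd
    · exact Or.inl (Or.inl ⟨hcp', c1, d1, hpr1, hc, hd⟩)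
    · exact Or.inl (Or.inr ⟨hcp', d1, c1, hpr1.trans Sym2.eq_swap, hd, hc⟩)
    · exact Or.inl (Or.inr ⟨hcp', c1, d1, hpr1, hc, hd⟩)
    · exact Or.inr ⟨hcp', c1, d1, hpr1, hc, hd⟩
  · rintro ((⟨h, -⟩ | ⟨h, -⟩) | ⟨h, -⟩) <;> exact h

lemma disj_AA_AH : Disjoint (AAset P P' v) (AHset P P' v) := by
  rw [Set.disjoint_left]
  rintro pr ⟨-, c, d, hpr, hAc, hAd⟩ ⟨-, c', d', hpr', hHc', hAd'⟩
  have hsym : s(c, d) = s(c', d') := hpr.symm.trans hpr'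
  rw [Sym2.eq_iff] at hsym
  rcases hsym with ⟨e1, e2⟩ | ⟨e1, e2⟩
  · exact C.arc_not_h (e1 ▸ hAc) hHc'
  · exact C.arc_not_h (e2 ▸ hAd) hHc'

lemma disj_AAH_HH : Disjoint (AAset P P' v ∪ AHset P P' v) (HHset P P' v) := by
  rw [Set.disjoint_left]
  rintro pr (⟨-, c, d, hpr, hAc, hAd⟩ | ⟨-, c, d, hpr, hHc, hAd⟩) ⟨-, c', d', hpr', hHc', hHd'⟩
  · have hsym : s(c, d) = s(c', d') := hpr.symm.trans hpr'
    rw [Sym2.eq_iff] at hsym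
    rcases hsym with ⟨e1, -⟩ | ⟨e1, -⟩
    · exact C.arc_not_h (e1 ▸ hAc) hHc'
    · exact C.arc_not_h (e1 ▸ hAc) hHd'
  · have hsym : s(c, d) = s(c', d') := hpr.symm.trans hpr'
    rw [Sym2.eq_iff] at hsym
    rcases hsym with ⟨-, e2⟩ | ⟨-, e2⟩
    · exact C.arc_not_h (e2 ▸ hAd) hHd'
    · exact C.arc_not_h (e2 ▸ hAd) hHc'

end Good
end PartC4

section PartC5

lemma cast_sq_sub (n : ℕ) : ((n * n - n : ℕ) : ℚ) = (n : ℚ) * (n : ℚ) - (n : ℚ) := by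
  have h : n ≤ n * n := by
    cases n with
    | zero => simp
    | succ m => exact Nat.le_mul_of_pos_left (m + 1) (Nat.succ_pos m)
  rw [Nat.cast_sub h, Nat.cast_mul]

theorem crossing_count_with_strength
    (k t s : ℕ) (hk : 3 ≤ k) (P P' : Set E3) (hP' : P' ⊆ P)
    (hPS : P ⊆ unitSphere) (hPfin : P.Finite) (hcard : P.ncard = k)
    (hgen : GenPos P) (ht : t = k - P'.ncard)
    (v : E3 → E3) (hv : ∀ p ∈ P', ‖v p‖ = 1 ∧ ⟪p, v p⟫ = 0)
    (hgc : ∀ p ∈ P', ((Submodule.span ℝ {p, v p} : Set E3) ∩ unitSphere) ∩ phat P =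
      ({p, -p} : Set E3))
    (hs : s = Set.ncard {pr : Sym2 E3 | ∃ p ∈ P', ∃ p' ∈ P', p ≠ p' ∧
      (halfCircle p (v p) ∩ halfCircle p' (v p')).Nonempty ∧ pr = s(p, p')}) :
    (Set.ncard (crossingPairs (drawingCurves P v P')) : ℚ) =
      Hfun (2 * k) - (t : ℚ) * ((k : ℚ) - 1) * ((k : ℚ) - 2) / 2 + (s : ℚ) := by
  classical
  have C : Good k P P' v := ⟨hk, hP', hPS, hPfin, hcard, hgen, hv, hgc⟩
  set F : Finset E3 := hPfin.toFinset with hFdef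
  have hF : (F : Set E3) = P := hPfin.coe_toFinset
  have hP'fin : P'.Finite := hPfin.subset hP'
  set F' : Finset E3 := hP'fin.toFinset with hF'def
  have hF' : (F' : Set E3) = P' := hP'fin.coe_toFinset
  have hFcard : F.card = k := by
    have h1 := Set.ncard_coe_finset F
    rw [hF, hcard] at h1
    exact h1.symm
  set m : ℕ := P'.ncard with hmdef
  have hF'card : F'.card = m := by
    have h1 := Set.ncard_coe_finset F'
    rw [hF'] at h1
    exact h1.symm
  have hmk : m ≤ k := by
    rw [← hcard, hmdef]
    exact Set.ncard_le_ncard hP' hPfin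
  have hAAfin : (AAset P P' v).Finite := by
    rw [C.AAset_eq hF]; exact (WAA P F).finite_toSet
  have hAHfin : (AHset P P' v).Finite := by
    rw [C.AHset_eq hF hF']; exact (WAH P v F F').finite_toSet
  have hHHfin : (HHset P P' v).Finite := by
    rw [C.HHset_eq]; exact C.Sset_finite.image _
  have hAA : (AAset P P' v).ncard * 4 = (k * k - k) * ((k - 2) * (k - 2) - (k - 2)) := by
    rw [C.AAset_eq hF, Set.ncard_coe_finset, C.card_WAA hF, card_Q4, hFcard]
  have hAH : (AHset P P' v).ncard * 2 = m * ((k - 1) * (k - 1) - (k - 1)) := by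
    rw [C.AHset_eq hF hF', Set.ncard_coe_finset, C.card_WAH hF hF', C.card_DAH hF hF',
      hFcard, hF'card]
  have hHH : (HHset P P' v).ncard = s := by
    rw [C.ncard_HHset]
    unfold Sset
    exact hs.symm
  rw [C.cross_decomp, Set.ncard_union_eq C.disj_AAH_HH (hAAfin.union hAHfin) hHHfin,
    Set.ncard_union_eq C.disj_AA_AH hAAfin hAHfin]
  -- Hfun evaluation
  have hH1 : 2 * k / 2 = k := by omega
  have hH2 : (2 * k - 1) / 2 = k - 1 := by omega
  have hH3 : (2 * k - 2) / 2 = k - 1 := by omega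
  have hH4 : (2 * k - 3) / 2 = k - 2 := by omega
  have cK1 : ((k - 1 : ℕ) : ℚ) = (k : ℚ) - 1 := by
    rw [Nat.cast_sub (by omega)]; norm_num
  have cK2 : ((k - 2 : ℕ) : ℚ) = (k : ℚ) - 2 := by
    rw [Nat.cast_sub (by omega)]; norm_num
  have hHfun : Hfun (2 * k) = (1 / 4 : ℚ) * (k : ℚ) * ((k : ℚ) - 1) * ((k : ℚ) - 1) *
      ((k : ℚ) - 2) := by
    unfold Hfun
    rw [hH1, hH2, hH3, hH4, cK1, cK2]
  have qAA : ((AAset P P' v).ncard : ℚ) * 4 =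
      ((k : ℚ) * k - k) * (((k : ℚ) - 2) * ((k : ℚ) - 2) - ((k : ℚ) - 2)) := by
    calc ((AAset P P' v).ncard : ℚ) * 4
        = (((AAset P P' v).ncard * 4 : ℕ) : ℚ) := by push_cast; ring
      _ = (((k * k - k) * ((k - 2) * (k - 2) - (k - 2)) : ℕ) : ℚ) := by rw [hAA]
      _ = ((k : ℚ) * k - k) * (((k : ℚ) - 2) * ((k : ℚ) - 2) - ((k : ℚ) - 2)) := by
          rw [Nat.cast_mul, cast_sq_sub, cast_sq_sub, cK2]
  have qAH : ((AHset P P' v).ncard : ℚ) * 2 =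
      (m : ℚ) * (((k : ℚ) - 1) * ((k : ℚ) - 1) - ((k : ℚ) - 1)) := by
    calc ((AHset P P' v).ncard : ℚ) * 2
        = (((AHset P P' v).ncard * 2 : ℕ) : ℚ) := by push_cast; ring
      _ = ((m * ((k - 1) * (k - 1) - (k - 1)) : ℕ) : ℚ) := by rw [hAH]
      _ = (m : ℚ) * (((k : ℚ) - 1) * ((k : ℚ) - 1) - ((k : ℚ) - 1)) := by
          rw [Nat.cast_mul, cast_sq_sub, cK1]
  have qHH : ((HHset P P' v).ncard : ℚ) = (s : ℚ) := by rw [hHH]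
  have ct : (t : ℚ) = (k : ℚ) - (m : ℚ) := by
    rw [ht, Nat.cast_sub hmk]
  rw [hHfun, ct]
  push_cast
  linear_combination qAA / 4 + qAH / 2 + qHH


end PartC5

end
end

section
/- For every ε > 0, every integer n ≥ 1, and every half-circle C on the unit sphere S², there exist n pairwise disjoint half-circles C₁, …, Cₙ on S², each contained in the open ε-neighborhood of C. -/
open Set
open scoped RealInnerProductSpace

noncomputable section

lemma keyScalar (δ gi gj X1 X2 X3 : ℝ) (hδ : 0 < δ) (hgj : 0 < gj) (hij : gj < gi)
    (h1 : δ^2*gi^2*gj*(1 + 2*δ^2*gi^2) < gi - gj)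
    (Ei : δ^2*gi^2*X1 + X2 + δ*gi*X3 = 0)
    (Ej : δ^2*gj^2*X1 + X2 + δ*gj*X3 = 0)
    (Si : 0 ≤ 2*δ*gi*X1 + (-(δ*gi + δ^2*gi^2*(2*δ*gi)))*X2 + 1*X3)
    (Sj : 0 ≤ 2*δ*gj*X1 + (-(δ*gj + δ^2*gj^2*(2*δ*gj)))*X2 + 1*X3) :
    X1 = 0 ∧ X2 = 0 ∧ X3 = 0 := by
  have hd : δ * (gi - gj) ≠ 0 := mul_ne_zero (ne_of_gt hδ) (ne_of_gt (sub_pos.mpr hij))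
  have h0 : δ * (gi - gj) * (X3 + δ * (gi + gj) * X1) = 0 := by
    linear_combination Ei - Ej
  have hX3 : X3 = -(δ * (gi + gj)) * X1 := by
    rcases mul_eq_zero.mp h0 with h | h
    · exact absurd h hd
    · linarith
  have hX2 : X2 = δ^2 * gi * gj * X1 := by
    linear_combination Ei - δ*gi*hX3
  have hSi : 2*δ*gi*X1 + (-(δ*gi + δ^2*gi^2*(2*δ*gi)))*X2 + 1*X3
      = δ * X1 * ((gi - gj) - δ^2*gi^2*gj*(1 + 2*δ^2*gi^2)) := by
    linear_combination (-(δ*gi + δ^2*gi^2*(2*δ*gi)))*hX2 + hX3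
  have hSj : 2*δ*gj*X1 + (-(δ*gj + δ^2*gj^2*(2*δ*gj)))*X2 + 1*X3
      = δ * X1 * (-(gi - gj) - δ^2*gj^2*gi*(1 + 2*δ^2*gj^2)) := by
    linear_combination (-(δ*gj + δ^2*gj^2*(2*δ*gj)))*hX2 + hX3
  rw [hSi] at Si
  rw [hSj] at Sj
  have hKi : 0 < (gi - gj) - δ^2*gi^2*gj*(1 + 2*δ^2*gi^2) := by linarith
  have hgi : 0 < gi := hgj.trans hij
  have hT : 0 ≤ δ^2*gj^2*gi*(1 + 2*δ^2*gj^2) := by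
    have ha : (0:ℝ) ≤ δ^2*gj^2 := by positivity
    have hb : (0:ℝ) ≤ 1+2*δ^2*gj^2 := by positivity
    have := mul_nonneg (mul_nonneg ha (le_of_lt hgi)) hb
    linarith
  have hKj : -(gi - gj) - δ^2*gj^2*gi*(1 + 2*δ^2*gj^2) < 0 := by linarith
  have hpos : 0 ≤ X1 := by
    by_contra h
    push_neg at h
    have := mul_neg_of_neg_of_pos (mul_neg_of_pos_of_neg hδ h) hKi
    linarith
  have hneg : X1 ≤ 0 := by
    by_contra h
    push_neg at h
    have := mul_neg_of_pos_of_neg (mul_pos hδ h) hKj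
    linarith
  have hX1 : X1 = 0 := le_antisymm hneg hpos
  refine ⟨hX1, ?_, ?_⟩
  · rw [hX2, hX1]; ring
  · rw [hX3, hX1]; ring

lemma exists_ortho (p v0 : E3) : ∃ w : E3, ‖w‖ = 1 ∧ ⟪p, w⟫ = 0 ∧ ⟪v0, w⟫ = 0 := by
  classical
  set K := (Submodule.span ℝ ({p, v0} : Set E3))ᗮ with hK
  have hne : K ≠ ⊥ := by
    intro hbot
    have htop : Submodule.span ℝ ({p, v0} : Set E3) = ⊤ :=
      Submodule.orthogonal_eq_bot_iff.mp hbot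
    have h2 : Module.finrank ℝ (Submodule.span ℝ ({p, v0} : Set E3)) ≤ 2 := by
      refine le_trans (finrank_span_le_card _) ?_
      have : ({p, v0} : Set E3).toFinset ⊆ {p, v0} := by
        intro x hx; simpa using hx
      calc (({p, v0} : Set E3).toFinset).card ≤ ({p, v0} : Finset E3).card :=
            Finset.card_le_card this
        _ ≤ 2 := Finset.card_insert_le _ _ |>.trans (by simp)
    rw [htop] at h2
    have h3 : Module.finrank ℝ E3 = 3 := finrank_euclideanSpace_fin
    have := finrank_top ℝ E3
    omega
  obtain ⟨z, hzK, hz0⟩ := (Submodule.ne_bot_iff K).mp hne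
  have hzp : ⟪p, z⟫ = 0 :=
    (Submodule.mem_orthogonal _ _).mp hzK p (Submodule.subset_span (by simp))
  have hzv : ⟪v0, z⟫ = 0 :=
    (Submodule.mem_orthogonal _ _).mp hzK v0 (Submodule.subset_span (by simp))
  refine ⟨‖z‖⁻¹ • z, norm_smul_inv_norm hz0, ?_, ?_⟩ <;>
    rw [real_inner_smul_right] <;> simp [hzp, hzv]

lemma repr3 (p w v0 : E3) (hp : ‖p‖ = 1) (hw : ‖w‖ = 1) (hv : ‖v0‖ = 1)
    (hpw : ⟪p, w⟫ = 0) (hpv : ⟪p, v0⟫ = 0) (hwv : ⟪w, v0⟫ = 0) (x : E3) :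
    x = ⟪p, x⟫ • p + ⟪w, x⟫ • w + ⟪v0, x⟫ • v0 := by
  classical
  have hon : Orthonormal ℝ ![p, w, v0] := by
    rw [orthonormal_iff_ite]
    intro i j
    have hpp : ⟪p, p⟫ = 1 := by
      rw [real_inner_self_eq_norm_mul_norm, hp]; norm_num
    have hww : ⟪w, w⟫ = 1 := by
      rw [real_inner_self_eq_norm_mul_norm, hw]; norm_num
    have hvv : ⟪v0, v0⟫ = 1 := by
      rw [real_inner_self_eq_norm_mul_norm, hv]; norm_num
    have hwp : ⟪w, p⟫ = 0 := by rw [real_inner_comm]; exact hpw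
    have hvp : ⟪v0, p⟫ = 0 := by rw [real_inner_comm]; exact hpv
    have hvw : ⟪v0, w⟫ = 0 := by rw [real_inner_comm]; exact hwv
    fin_cases i <;> fin_cases j <;>
      simp [hpp, hww, hvv, hpw, hpv, hwv, hwp, hvp, hvw, hp, hw, hv]
  have hsp : ⊤ ≤ Submodule.span ℝ (Set.range ![p, w, v0]) := by
    rw [(hon.linearIndependent).span_eq_top_of_card_eq_finrank]
    simp [finrank_euclideanSpace_fin]
  let b : OrthonormalBasis (Fin 3) ℝ E3 := OrthonormalBasis.mk hon hsp
  have hb := b.sum_repr' x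
  rw [Fin.sum_univ_three] at hb
  have hbc : ∀ i, b i = ![p, w, v0] i := fun i => by
    rw [show ⇑b = ![p, w, v0] from OrthonormalBasis.coe_mk hon hsp]
  rw [hbc 0, hbc 1, hbc 2] at hb
  simpa using hb.symm

lemma normalize_close (u e : E3) (he : ‖e‖ = 1) (hu : u ≠ 0) :
    ‖‖u‖⁻¹ • u - e‖ ≤ 2 * ‖u - e‖ := by
  have hn : 0 < ‖u‖ := norm_pos_iff.mpr hu
  have key : ‖u‖⁻¹ • u - e = (‖u‖⁻¹ - 1) • u + (u - e) := by
    rw [sub_smul, one_smul]; abel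
  have h1 : ‖(‖u‖⁻¹ - 1) • u‖ = |1 - ‖u‖| := by
    rw [norm_smul, Real.norm_eq_abs]
    rw [← abs_of_nonneg (le_of_lt hn) (a := ‖u‖), ← abs_mul]
    congr 1
    field_simp
    rw [abs_of_nonneg (norm_nonneg u)]; ring
  have h2 : |1 - ‖u‖| ≤ ‖u - e‖ := by
    have := abs_norm_sub_norm_le e u
    rw [he] at this
    rwa [norm_sub_rev u e]
  calc ‖‖u‖⁻¹ • u - e‖ ≤ ‖(‖u‖⁻¹ - 1) • u‖ + ‖u - e‖ := by
        rw [key]; exact norm_add_le _ _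
    _ ≤ ‖u - e‖ + ‖u - e‖ := by rw [h1]; linarith
    _ = 2 * ‖u - e‖ := by ring

lemma unit_inner_self (u v x : E3) (hu : ‖u‖ = 1) (hv : ‖v‖ = 1) (huv : ⟪u, v⟫ = 0)
    (t : ℝ) (hx : x = Real.cos t • u + Real.sin t • v) : ⟪x, x⟫ = 1 := by
  have hvu : ⟪v, u⟫ = 0 := by rw [real_inner_comm]; exact huv
  have huu : ⟪u, u⟫ = 1 := by rw [real_inner_self_eq_norm_mul_norm, hu]; norm_num
  have hvv : ⟪v, v⟫ = 1 := by rw [real_inner_self_eq_norm_mul_norm, hv]; norm_num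
  rw [hx]
  simp only [inner_add_left, inner_add_right, real_inner_smul_left,
    real_inner_smul_right, huu, hvv, huv, hvu]
  linear_combination Real.sin_sq_add_cos_sq t


set_option maxHeartbeats 1000000 in
theorem halfCircles_in_neighborhood
    (ε : ℝ) (hε : 0 < ε) (n : ℕ) (hn : 1 ≤ n) (C : Set E3)
    (hC : ∃ p v0 : E3, ‖p‖ = 1 ∧ ‖v0‖ = 1 ∧ ⟪p, v0⟫ = 0 ∧ C = halfCircle p v0) :
    ∃ p v : Fin n → E3,
      (∀ i, ‖p i‖ = 1 ∧ ‖v i‖ = 1 ∧ ⟪p i, v i⟫ = 0) ∧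
      (∀ i, halfCircle (p i) (v i) ⊆ {x | ∃ y ∈ C, ‖x - y‖ < ε}) ∧
      (∀ i j, i ≠ j → halfCircle (p i) (v i) ∩ halfCircle (p j) (v j) = ∅) := by
  classical
  obtain ⟨p, v0, hp, hv0, hpv0, hCeq⟩ := hC
  obtain ⟨w, hw, hpw, hv0w⟩ := exists_ortho p v0
  have hwv0 : ⟪w, v0⟫ = 0 := by rw [real_inner_comm]; exact hv0w
  have hpp : ⟪p, p⟫ = 1 := by rw [real_inner_self_eq_norm_mul_norm, hp]; norm_num
  have hww : ⟪w, w⟫ = 1 := by rw [real_inner_self_eq_norm_mul_norm, hw]; norm_num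
  have hvv : ⟪v0, v0⟫ = 1 := by rw [real_inner_self_eq_norm_mul_norm, hv0]; norm_num
  have hwp : ⟪w, p⟫ = 0 := by rw [real_inner_comm]; exact hpw
  have hv0p : ⟪v0, p⟫ = 0 := by rw [real_inner_comm]; exact hpv0
  -- opaque scalar data
  obtain ⟨nR, δ, γ, hnR, hδ0, hδa, hδb, hγ1, hγn, hγup, hγne⟩ :
      ∃ (nR δ : ℝ) (γ : Fin n → ℝ), 1 ≤ nR ∧ 0 < δ ∧ 4*nR^3*δ ≤ 1 ∧ 80*nR*δ ≤ ε ∧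
        (∀ i, 1 ≤ γ i) ∧ (∀ i, γ i ≤ nR) ∧
        (∀ a b : Fin n, γ b < γ a → γ b + 1 ≤ γ a) ∧
        (∀ i j : Fin n, i ≠ j → γ i ≠ γ j) := by
    have hnR : (1:ℝ) ≤ (n:ℝ) := by exact_mod_cast hn
    have hnR0 : (0:ℝ) < (n:ℝ) := by linarith
    refine ⟨(n:ℝ), min (1/(4*(n:ℝ)^3)) (ε/(80*(n:ℝ))), fun i => ((i:ℕ):ℝ) + 1,
      hnR, ?_, ?_, ?_, ?_, ?_, ?_, ?_⟩
    · apply lt_min <;> positivity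
    · have h := min_le_left (1/(4*(n:ℝ)^3)) (ε/(80*(n:ℝ)))
      rw [← le_div_iff₀' (by positivity)]
      exact h
    · have h := min_le_right (1/(4*(n:ℝ)^3)) (ε/(80*(n:ℝ)))
      rw [← le_div_iff₀' (by positivity)]
      exact h
    · intro i
      show (1:ℝ) ≤ ((i:ℕ):ℝ) + 1
      have : (0:ℝ) ≤ ((i:ℕ):ℝ) := Nat.cast_nonneg _
      linarith
    · intro i
      show ((i:ℕ):ℝ) + 1 ≤ (n:ℝ)
      have h1 : (i : ℕ) < n := i.isLt
      exact_mod_cast h1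
    · intro a b hab
      simp only at hab ⊢
      have h1 : ((b:ℕ):ℝ) < ((a:ℕ):ℝ) := by linarith
      have h2 : (b:ℕ) < (a:ℕ) := by exact_mod_cast h1
      have h3 : (b:ℕ) + 1 ≤ (a:ℕ) := h2
      have h4 : ((b:ℕ):ℝ) + 1 ≤ ((a:ℕ):ℝ) := by exact_mod_cast h3
      linarith
    · intro i j hij
      simp only
      intro h
      apply hij
      have h1 : ((i:ℕ):ℝ) = ((j:ℕ):ℝ) := by linarith
      have h2 : (i:ℕ) = (j:ℕ) := by exact_mod_cast h1
      exact Fin.ext h2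
  have hγ0 : ∀ i, 0 < γ i := fun i => lt_of_lt_of_le one_pos (hγ1 i)
  have hnR0 : 0 < nR := by linarith
  -- opaque coefficient functions
  obtain ⟨A, hA⟩ : ∃ A : Fin n → ℝ, ∀ i, A i = δ^2*(γ i)^2 := ⟨_, fun _ => rfl⟩
  obtain ⟨B, hB⟩ : ∃ B : Fin n → ℝ, ∀ i, B i = 2*δ*(γ i) := ⟨_, fun _ => rfl⟩
  obtain ⟨Cc, hCc⟩ : ∃ Cc : Fin n → ℝ, ∀ i, Cc i = δ*(γ i) := ⟨_, fun _ => rfl⟩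
  obtain ⟨Φ, hΦ⟩ : ∃ Φ : ℝ → ℝ → ℝ → E3,
      ∀ a b c, Φ a b c = a • p + b • w + c • v0 := ⟨_, fun _ _ _ => rfl⟩
  have hinner : ∀ a b c d e f : ℝ, ⟪Φ a b c, Φ d e f⟫ = a*d + b*e + c*f := by
    intro a b c d e f
    simp only [hΦ, inner_add_left, inner_add_right, real_inner_smul_left,
      real_inner_smul_right, hpp, hww, hvv, hpw, hpv0, hwv0, hwp, hv0p, hv0w]
    ring
  have hΦsq : ∀ a b c : ℝ, ‖Φ a b c‖^2 = a^2 + b^2 + c^2 := by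
    intro a b c
    rw [← real_inner_self_eq_norm_sq, hinner]; ring
  have hΦle : ∀ a b c : ℝ, ‖Φ a b c‖ ≤ |a| + |b| + |c| := by
    intro a b c
    rw [hΦ]
    calc ‖a • p + b • w + c • v0‖ ≤ ‖a • p + b • w‖ + ‖c • v0‖ := norm_add_le _ _
      _ ≤ ‖a • p‖ + ‖b • w‖ + ‖c • v0‖ := by linarith [norm_add_le (a • p) (b • w)]
      _ = |a| + |b| + |c| := by
          rw [norm_smul, norm_smul, norm_smul, hp, hw, hv0]
          simp [Real.norm_eq_abs]
  obtain ⟨Nv, hNv⟩ : ∃ Nv : Fin n → E3,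
      ∀ i, Nv i = Φ (A i) 1 (Cc i) := ⟨_, fun _ => rfl⟩
  obtain ⟨Mv, hMv⟩ : ∃ Mv : Fin n → E3,
      ∀ i, Mv i = Φ (B i) (-(Cc i + A i * B i)) 1 := ⟨_, fun _ => rfl⟩
  obtain ⟨Pv, hPv⟩ : ∃ Pv : Fin n → E3,
      ∀ i, Pv i = Φ (1 + (Cc i)^2 + A i * B i * Cc i) (Cc i * B i - A i)
        (-(A i * Cc i + (A i)^2 * B i + B i)) := ⟨_, fun _ => rfl⟩
  have hApos : ∀ i, 0 < A i := fun i => by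
    rw [hA]; exact mul_pos (pow_pos hδ0 2) (pow_pos (hγ0 i) 2)
  have hBpos : ∀ i, 0 < B i := fun i => by
    rw [hB]; have := hγ0 i; positivity
  have hCpos : ∀ i, 0 < Cc i := fun i => by
    rw [hCc]; exact mul_pos hδ0 (hγ0 i)
  have hMsq : ∀ i, ‖Mv i‖^2 = (B i)^2 + (-(Cc i + A i * B i))^2 + 1^2 := fun i => by
    rw [hMv]; exact hΦsq _ _ _
  have hPsq : ∀ i, ‖Pv i‖^2 = (1 + (Cc i)^2 + A i * B i * Cc i)^2 + (Cc i * B i - A i)^2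
      + (-(A i * Cc i + (A i)^2 * B i + B i))^2 := fun i => by
    rw [hPv]; exact hΦsq _ _ _
  have hMnorm : ∀ i, 1 ≤ ‖Mv i‖ := by
    intro i
    have h := hMsq i
    nlinarith only [h, norm_nonneg (Mv i), sq_nonneg (B i), sq_nonneg (Cc i + A i * B i)]
  have hPnorm : ∀ i, 1 ≤ ‖Pv i‖ := by
    intro i
    have h := hPsq i
    have h1 : 0 < Cc i := hCpos i
    have h2 : 0 < A i := hApos i
    have h3 : 0 < B i := hBpos i
    have hfirst : 1 ≤ 1 + (Cc i)^2 + A i * B i * Cc i := by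
      nlinarith only [sq_nonneg (Cc i), mul_pos (mul_pos h2 h3) h1]
    have hsq1 : 1 ≤ ‖Pv i‖^2 := by
      nlinarith only [h, sq_nonneg (Cc i * B i - A i),
        sq_nonneg (A i * Cc i + (A i)^2 * B i + B i), hfirst]
    nlinarith only [norm_nonneg (Pv i), hsq1]
  have hMne : ∀ i, Mv i ≠ 0 := fun i h => by
    have := hMnorm i; rw [h, norm_zero] at this; linarith
  have hPne : ∀ i, Pv i ≠ 0 := fun i h => by
    have := hPnorm i; rw [h, norm_zero] at this; linarith
  have hPM : ∀ i, ⟪Pv i, Mv i⟫ = 0 := fun i => by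
    rw [hPv, hMv, hinner]; ring
  have hPN : ∀ i, ⟪Pv i, Nv i⟫ = 0 := fun i => by
    rw [hPv, hNv, hinner]; ring
  have hMN : ∀ i, ⟪Mv i, Nv i⟫ = 0 := fun i => by
    rw [hMv, hNv, hinner]; ring
  have hp1 : ∀ i, ‖‖Pv i‖⁻¹ • Pv i‖ = 1 := fun i => norm_smul_inv_norm (hPne i)
  have hv1 : ∀ i, ‖‖Mv i‖⁻¹ • Mv i‖ = 1 := fun i => norm_smul_inv_norm (hMne i)
  have hortho : ∀ i, ⟪‖Pv i‖⁻¹ • Pv i, ‖Mv i‖⁻¹ • Mv i⟫ = 0 := fun i => by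
    rw [real_inner_smul_left, real_inner_smul_right, hPM i]; ring
  refine ⟨fun i => ‖Pv i‖⁻¹ • Pv i, fun i => ‖Mv i‖⁻¹ • Mv i, ?_, ?_, ?_⟩
  · exact fun i => ⟨hp1 i, hv1 i, hortho i⟩
  · -- neighborhood
    intro i x hx
    obtain ⟨t, ht, hxeq⟩ := hx
    refine ⟨Real.cos t • p + Real.sin t • v0, by rw [hCeq]; exact ⟨t, ht, rfl⟩, ?_⟩
    obtain ⟨d, hd⟩ : ∃ d : ℝ, d = δ * γ i := ⟨_, rfl⟩
    have hd0 : 0 < d := by rw [hd]; exact mul_pos hδ0 (hγ0 i)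
    have hd4 : d ≤ 1/4 := by
      have h0 : nR ≤ nR^3 := le_self_pow₀ hnR (by norm_num)
      have hdn : δ * γ i ≤ δ * nR := mul_le_mul_of_nonneg_left (hγn i) hδ0.le
      have h1 : δ * nR ≤ δ * nR^3 := mul_le_mul_of_nonneg_left h0 hδ0.le
      have h2 : δ * nR^3 ≤ 1/4 := by linarith only [hδa]
      rw [hd]; linarith
    have hdeps : d ≤ ε/80 := by
      have hdn : δ * γ i ≤ δ * nR := mul_le_mul_of_nonneg_left (hγn i) hδ0.le
      have h2 : δ * nR ≤ ε/80 := by linarith only [hδb]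
      rw [hd]; linarith
    have hdnn : (0:ℝ) ≤ d := hd0.le
    have b1 : d^2 ≤ d/4 := by linarith only [mul_le_mul_of_nonneg_left hd4 hdnn]
    have b2 : d^3 ≤ d/16 := by
      have h := mul_le_mul_of_nonneg_left hd4 (sq_nonneg d)
      linarith only [h, b1]
    have b3 : d^4 ≤ d/64 := by
      have h := mul_le_mul_of_nonneg_left hd4 (pow_nonneg hdnn 3)
      linarith only [h, b2]
    have b4 : d^5 ≤ d/256 := by
      have h := mul_le_mul_of_nonneg_left hd4 (pow_nonneg hdnn 4)
      linarith only [h, b3]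
    have hPsub : Pv i - p = Φ ((Cc i)^2 + A i * B i * Cc i) (Cc i * B i - A i)
        (-(A i * Cc i + (A i)^2 * B i + B i)) := by
      rw [hPv, hΦ, hΦ]
      module
    have hPbd : ‖Pv i - p‖ ≤ 4 * d := by
      have h := hΦle ((Cc i)^2 + A i * B i * Cc i) (Cc i * B i - A i)
        (-(A i * Cc i + (A i)^2 * B i + B i))
      rw [← hPsub] at h
      have hco1 : (Cc i)^2 + A i * B i * Cc i = d^2 + 2*d^4 := by
        rw [hA, hB, hCc, hd]; ring
      have hco2 : Cc i * B i - A i = d^2 := by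
        rw [hA, hB, hCc, hd]; ring
      have hco3 : A i * Cc i + (A i)^2 * B i + B i = 2*d + d^3 + 2*d^5 := by
        rw [hA, hB, hCc, hd]; ring
      rw [hco1, hco2, hco3] at h
      rw [abs_of_nonneg (by positivity : (0:ℝ) ≤ d^2 + 2*d^4),
        abs_of_nonneg (sq_nonneg d), abs_neg] at h
      have h3 : (0:ℝ) ≤ 2*d + d^3 + 2*d^5 := by
        have := pow_nonneg hdnn 3
        have := pow_nonneg hdnn 5
        linarith
      rw [abs_of_nonneg h3] at h
      linarith
    have hMsub : Mv i - v0 = Φ (B i) (-(Cc i + A i * B i)) 0 := by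
      rw [hMv, hΦ, hΦ]
      module
    have hMbd : ‖Mv i - v0‖ ≤ 4 * d := by
      have h := hΦle (B i) (-(Cc i + A i * B i)) 0
      rw [← hMsub] at h
      have hco2 : Cc i + A i * B i = d + 2*d^3 := by
        rw [hA, hB, hCc, hd]; ring
      have hco1 : B i = 2*d := by rw [hB, hd]; ring
      rw [hco2, hco1, abs_neg, abs_zero] at h
      have h2 : (0:ℝ) ≤ d + 2*d^3 := by
        have := pow_nonneg hdnn 3
        linarith
      rw [abs_of_nonneg (by linarith : (0:ℝ) ≤ 2*d), abs_of_nonneg h2] at h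
      linarith
    have hClosep : ‖‖Pv i‖⁻¹ • Pv i - p‖ ≤ 8 * d := by
      have := normalize_close (Pv i) p hp (hPne i)
      linarith
    have hClosev : ‖‖Mv i‖⁻¹ • Mv i - v0‖ ≤ 8 * d := by
      have := normalize_close (Mv i) v0 hv0 (hMne i)
      linarith
    have hsplit : x - (Real.cos t • p + Real.sin t • v0)
        = Real.cos t • (‖Pv i‖⁻¹ • Pv i - p) + Real.sin t • (‖Mv i‖⁻¹ • Mv i - v0) := by
      rw [hxeq, smul_sub, smul_sub]
      abel
    rw [hsplit]
    calc ‖Real.cos t • (‖Pv i‖⁻¹ • Pv i - p) + Real.sin t • (‖Mv i‖⁻¹ • Mv i - v0)‖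
        ≤ ‖Real.cos t • (‖Pv i‖⁻¹ • Pv i - p)‖ + ‖Real.sin t • (‖Mv i‖⁻¹ • Mv i - v0)‖ :=
          norm_add_le _ _
      _ = |Real.cos t| * ‖‖Pv i‖⁻¹ • Pv i - p‖ + |Real.sin t| * ‖‖Mv i‖⁻¹ • Mv i - v0‖ := by
          rw [norm_smul, norm_smul, Real.norm_eq_abs, Real.norm_eq_abs]
      _ ≤ 1 * (8 * d) + 1 * (8 * d) := by
          have h1 := Real.abs_cos_le_one t
          have h2 := Real.abs_sin_le_one t
          have h5 : (0:ℝ) ≤ ‖‖Pv i‖⁻¹ • Pv i - p‖ := norm_nonneg _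
          have h6 : (0:ℝ) ≤ ‖‖Mv i‖⁻¹ • Mv i - v0‖ := norm_nonneg _
          have g1 := mul_le_mul h1 hClosep h5 zero_le_one
          have g2 := mul_le_mul h2 hClosev h6 zero_le_one
          linarith
      _ < ε := by linarith
  · -- disjointness
    intro i j hij
    have main : ∀ a b : Fin n, γ b < γ a →
        ∀ x, x ∈ halfCircle (‖Pv a‖⁻¹ • Pv a) (‖Mv a‖⁻¹ • Mv a) →
          x ∈ halfCircle (‖Pv b‖⁻¹ • Pv b) (‖Mv b‖⁻¹ • Mv b) → False := by
      intro a b hab x hxa hxb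
      obtain ⟨t, ht, hxt⟩ := hxa
      obtain ⟨s, hs, hxs⟩ := hxb
      have hxx : ⟪x, x⟫ = 1 :=
        unit_inner_self _ _ x (hp1 a) (hv1 a) (hortho a) t hxt
      obtain ⟨X1, hX1⟩ : ∃ r : ℝ, r = ⟪p, x⟫ := ⟨_, rfl⟩
      obtain ⟨X2, hX2⟩ : ∃ r : ℝ, r = ⟪w, x⟫ := ⟨_, rfl⟩
      obtain ⟨X3, hX3⟩ : ∃ r : ℝ, r = ⟪v0, x⟫ := ⟨_, rfl⟩
      have hxrep : x = Φ X1 X2 X3 := by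
        rw [hΦ, hX1, hX2, hX3]
        exact repr3 p w v0 hp hw hv0 hpw hpv0 hwv0 x
      have hNz : ∀ (c : Fin n) (r : ℝ), r ∈ Icc (0:ℝ) Real.pi →
          x = Real.cos r • (‖Pv c‖⁻¹ • Pv c) + Real.sin r • (‖Mv c‖⁻¹ • Mv c) →
          X1 * A c + X2 * 1 + X3 * Cc c = 0 := by
        intro c r hr hxr
        have h0 : ⟪x, Nv c⟫ = 0 := by
          rw [hxr, inner_add_left, real_inner_smul_left, real_inner_smul_left,
            real_inner_smul_left, real_inner_smul_left, hPN c, hMN c]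
          ring
        rw [hxrep, hNv, hinner] at h0
        linarith
      have hSz : ∀ (c : Fin n) (r : ℝ), r ∈ Icc (0:ℝ) Real.pi →
          x = Real.cos r • (‖Pv c‖⁻¹ • Pv c) + Real.sin r • (‖Mv c‖⁻¹ • Mv c) →
          0 ≤ X1 * B c + X2 * (-(Cc c + A c * B c)) + X3 * 1 := by
        intro c r hr hxr
        have h0 : ⟪x, Mv c⟫ = Real.sin r * (‖Mv c‖⁻¹ * ⟪Mv c, Mv c⟫) := by
          rw [hxr, inner_add_left, real_inner_smul_left, real_inner_smul_left,
            real_inner_smul_left, real_inner_smul_left, hPM c]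
          ring
        have h2 : 0 ≤ ⟪x, Mv c⟫ := by
          rw [h0]
          exact mul_nonneg (Real.sin_nonneg_of_nonneg_of_le_pi hr.1 hr.2)
            (mul_nonneg (inv_nonneg.mpr (norm_nonneg _)) real_inner_self_nonneg)
        rw [hxrep, hMv, hinner] at h2
        linarith
      have Ea := hNz a t ht hxt
      have Eb := hNz b s hs hxs
      have Sa := hSz a t ht hxt
      have Sb := hSz b s hs hxs
      rw [hA, hCc] at Ea Eb
      rw [hA, hB, hCc] at Sa Sb
      have hab1 : γ b + 1 ≤ γ a := hγup a b hab
      have hsmall : δ^2*(γ a)^2*(γ b)*(1 + 2*δ^2*(γ a)^2) < γ a - γ b := by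
        have hnR3 : 1 ≤ nR^3 := one_le_pow₀ hnR
        have q1 : δ * nR^3 ≤ 1/4 := by linarith only [hδa]
        have hδq : δ ≤ 1/4 := by
          have h := mul_le_mul_of_nonneg_left hnR3 hδ0.le
          linarith only [q1, h]
        have hga0 : 0 < γ a := hγ0 a
        have hgb0 : 0 < γ b := hγ0 b
        have m1 : (γ a)^2*(γ b) ≤ nR^3 := by
          have t1 : γ a * γ a ≤ nR * nR :=
            mul_le_mul (hγn a) (hγn a) hga0.le hnR0.le
          have t2 : (γ a * γ a) * γ b ≤ (nR * nR) * nR :=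
            mul_le_mul t1 (hγn b) hgb0.le (by positivity)
          linarith only [t2]
        have m2 : δ^2*((γ a)^2*(γ b)) ≤ δ^2*nR^3 :=
          mul_le_mul_of_nonneg_left m1 (sq_nonneg δ)
        have m3 : δ^2*nR^3 ≤ 1/16 := by
          have t := mul_le_mul_of_nonneg_left q1 hδ0.le
          linarith only [t, hδq]
        have mX : δ^2*(γ a)^2*(γ b) ≤ 1/16 := by linarith only [m2, m3]
        have mXpos : 0 ≤ δ^2*(γ a)^2*(γ b) := by positivity
        have mY : δ^2*(γ a)^2 ≤ 1/16 := by
          have t := mul_le_mul_of_nonneg_left (hγ1 b)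
            (by positivity : (0:ℝ) ≤ δ^2*(γ a)^2)
          linarith only [t, mX]
        have mYpos : 0 ≤ δ^2*(γ a)^2 := by positivity
        have key : (δ^2*(γ a)^2*(γ b))*(1 + 2*(δ^2*(γ a)^2)) < 1 := by
          nlinarith only [mX, mY, mXpos, mYpos]
        linarith only [key, hab1]
      have hkey := keyScalar δ (γ a) (γ b) X1 X2 X3 hδ0 (hγ0 b) hab hsmall
        (by linarith only [Ea]) (by linarith only [Eb]) (by linarith only [Sa]) (by linarith only [Sb])
      obtain ⟨hz1, hz2, hz3⟩ := hkey
      have hx0 : x = 0 := by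
        rw [hxrep, hz1, hz2, hz3, hΦ]
        simp
      rw [hx0] at hxx
      simp at hxx
    rw [eq_empty_iff_forall_notMem]
    rintro x ⟨hxi, hxj⟩
    rcases lt_or_gt_of_ne (hγne i j hij) with h | h
    · exact main j i h x hxj hxi
    · exact main i j h x hxi hxj


end
end

section
/- For every integer k ≥ 3 there exist a set P ⊆ S² of k points in general position and, for each p ∈ P, a half-circle H_p with endpoints p and −p, such that the half-circles H_p (p ∈ P) are pairwise disjoint and the great circle of each H_p meets P ∪ (−P) only in {p, −p}; that is, a set of k points of strength 0 exists for every k. -/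
open Set
open scoped RealInnerProductSpace

noncomputable section

namespace SZAux

def aa (i : ℕ) : ℝ := (4/5) * (1 - (i:ℝ)^2) / (1 + (i:ℝ)^2)
def bb (i : ℕ) : ℝ := (4/5) * (2*(i:ℝ)) / (1 + (i:ℝ)^2)
def pt (i : ℕ) : E3 := WithLp.toLp 2 ![aa i, bb i, 3/5]
def vv (x : E3) : E3 := WithLp.toLp 2 ![-(5/4) * x 1, (5/4) * x 0, 0]

lemma one_add_sq_ne (i : ℕ) : (1 + (i:ℝ)^2) ≠ 0 := by positivity

lemma hsq (i : ℕ) : aa i ^ 2 + bb i ^ 2 = 16/25 := by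
  unfold aa bb; field_simp; ring

lemma pt0 (i : ℕ) : pt i 0 = aa i := rfl
lemma pt1 (i : ℕ) : pt i 1 = bb i := rfl
lemma pt2 (i : ℕ) : pt i 2 = 3/5 := rfl

lemma pt_inj : Function.Injective pt := by
  intro i j h
  have h0 : aa i = aa j := congrArg (· 0) h
  unfold aa at h0
  rw [div_eq_div_iff (one_add_sq_ne i) (one_add_sq_ne j)] at h0
  have h2 : ((i:ℝ) - j) * ((i:ℝ) + j) = 0 := by linear_combination (-5/8) * h0
  have hi : (0:ℝ) ≤ i := Nat.cast_nonneg i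
  have hj : (0:ℝ) ≤ j := Nat.cast_nonneg j
  have key : (i:ℝ) = j := by
    rcases mul_eq_zero.mp h2 with h3 | h3 <;> linarith
  exact_mod_cast key

lemma M_ne (i j : ℕ) (h : i ≠ j) : aa i * bb j - aa j * bb i ≠ 0 := by
  have hij : (i:ℝ) ≠ j := by exact_mod_cast h
  have key : (aa i * bb j - aa j * bb i) * ((1+(i:ℝ)^2)*(1+(j:ℝ)^2))
      = (32/25)*((j:ℝ)-(i:ℝ))*(1+(i:ℝ)*(j:ℝ)) := by
    unfold aa bb; field_simp; ring
  intro hM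
  rw [hM, zero_mul] at key
  have h1 : (0:ℝ) < 1+(i:ℝ)*(j:ℝ) := by positivity
  have h2 : (j:ℝ) - i ≠ 0 := sub_ne_zero.mpr (Ne.symm hij)
  rcases lt_or_gt_of_ne h2 with h3 | h3 <;> nlinarith

lemma D_pos (i j : ℕ) (h : i ≠ j) : 0 < 16/25 - (aa i * aa j + bb i * bb j) := by
  have hij : (i:ℝ) ≠ j := by exact_mod_cast h
  have key : (16/25 - (aa i * aa j + bb i * bb j)) * ((1+(i:ℝ)^2)*(1+(j:ℝ)^2))
      = (32/25)*((i:ℝ)-(j:ℝ))^2 := by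
    unfold aa bb; field_simp; ring
  have h2 : (i:ℝ) - j ≠ 0 := sub_ne_zero.mpr hij
  have h3 : (0:ℝ) < (32/25)*((i:ℝ)-(j:ℝ))^2 := by positivity
  have hp : (0:ℝ) < (1+(i:ℝ)^2)*(1+(j:ℝ)^2) := by positivity
  nlinarith

lemma Delta_ne (i j l : ℕ) (hij : i ≠ j) (hil : i ≠ l) (hjl : j ≠ l) :
    (aa i - aa l)*(bb j - bb l) - (aa j - aa l)*(bb i - bb l) ≠ 0 := by
  have h1 : (i:ℝ) ≠ j := by exact_mod_cast hij
  have h2 : (i:ℝ) ≠ l := by exact_mod_cast hil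
  have h3 : (j:ℝ) ≠ l := by exact_mod_cast hjl
  have key : ((aa i - aa l)*(bb j - bb l) - (aa j - aa l)*(bb i - bb l))
      * ((1+(i:ℝ)^2)*(1+(j:ℝ)^2)*(1+(l:ℝ)^2))
      = (64/25)*((j:ℝ)-(i:ℝ))*((l:ℝ)-(j:ℝ))*((l:ℝ)-(i:ℝ)) := by
    unfold aa bb; field_simp; ring
  intro hz
  rw [hz, zero_mul] at key
  have d1 : (j:ℝ)-(i:ℝ) ≠ 0 := sub_ne_zero.mpr (Ne.symm h1)
  have d2 : (l:ℝ)-(j:ℝ) ≠ 0 := sub_ne_zero.mpr (Ne.symm h3)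
  have d3 : (l:ℝ)-(i:ℝ) ≠ 0 := sub_ne_zero.mpr (Ne.symm h2)
  have : (64/25)*((j:ℝ)-(i:ℝ))*((l:ℝ)-(j:ℝ))*((l:ℝ)-(i:ℝ)) ≠ 0 :=
    mul_ne_zero (mul_ne_zero (mul_ne_zero (by norm_num) d1) d2) d3
  exact this key.symm

lemma norm_sq_E3 (x : E3) : ‖x‖^2 = x 0^2 + x 1^2 + x 2^2 := by
  rw [EuclideanSpace.norm_eq, Real.sq_sqrt (by positivity)]
  simp [Fin.sum_univ_three, sq_abs]

lemma inner_E3 (x y : E3) : ⟪x, y⟫ = x 0 * y 0 + x 1 * y 1 + x 2 * y 2 := by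
  simp [PiLp.inner_apply, Fin.sum_univ_three]; ring

lemma norm_pt (i : ℕ) : ‖pt i‖ = 1 := by
  have h := norm_sq_E3 (pt i)
  rw [pt0, pt1, pt2] at h
  have h2 := hsq i
  have h3 := norm_nonneg (pt i)
  nlinarith

lemma norm_vv (i : ℕ) : ‖vv (pt i)‖ = 1 := by
  have h := norm_sq_E3 (vv (pt i))
  have e0 : vv (pt i) 0 = -(5/4) * bb i := rfl
  have e1 : vv (pt i) 1 = (5/4) * aa i := rfl
  have e2 : vv (pt i) 2 = 0 := rfl
  rw [e0, e1, e2] at h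
  have h2 := hsq i
  have h3 := norm_nonneg (vv (pt i))
  nlinarith

lemma inner_pt_vv (i : ℕ) : ⟪pt i, vv (pt i)⟫ = 0 := by
  rw [inner_E3]
  show aa i * (-(5/4) * bb i) + bb i * ((5/4) * aa i) + (3/5) * 0 = 0
  ring

lemma pt_li (i j l : ℕ) (hij : i ≠ j) (hil : i ≠ l) (hjl : j ≠ l) :
    LinearIndependent ℝ ![pt i, pt j, pt l] := by
  rw [Fintype.linearIndependent_iff]
  intro g hg
  rw [Fin.sum_univ_three] at hg
  simp only [Matrix.cons_val_zero, Matrix.cons_val_one, Matrix.head_cons,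
    Matrix.cons_val_two, Matrix.tail_cons] at hg
  have e0 : g 0 * aa i + g 1 * aa j + g 2 * aa l = 0 := by
    simpa [pt] using congrArg (· 0) hg
  have e1 : g 0 * bb i + g 1 * bb j + g 2 * bb l = 0 := by
    simpa [pt] using congrArg (· 1) hg
  have e2 : g 0 * (3/5) + g 1 * (3/5) + g 2 * (3/5) = 0 := by
    simpa [pt] using congrArg (· 2) hg
  have hsum : g 0 + g 1 + g 2 = 0 := by linarith
  have f0 : g 0 * (aa i - aa l) + g 1 * (aa j - aa l) = 0 := by
    linear_combination e0 - aa l * hsum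
  have f1 : g 0 * (bb i - bb l) + g 1 * (bb j - bb l) = 0 := by
    linear_combination e1 - bb l * hsum
  have hD := Delta_ne i j l hij hil hjl
  have hg0 : g 0 = 0 := by
    have h : g 0 * ((aa i - aa l)*(bb j - bb l) - (aa j - aa l)*(bb i - bb l)) = 0 := by
      linear_combination (bb j - bb l) * f0 - (aa j - aa l) * f1
    exact (mul_eq_zero.mp h).resolve_right hD
  have hg1 : g 1 = 0 := by
    have h : g 1 * ((aa i - aa l)*(bb j - bb l) - (aa j - aa l)*(bb i - bb l)) = 0 := by
      linear_combination (aa i - aa l) * f1 - (bb i - bb l) * f0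
    exact (mul_eq_zero.mp h).resolve_right hD
  have hg2 : g 2 = 0 := by linarith
  intro idx
  fin_cases idx <;> assumption

lemma span_eq (k i : ℕ) (hi : i < k) :
    ((Submodule.span ℝ {pt i, vv (pt i)} : Set E3) ∩ unitSphere)
        ∩ phat (pt '' ↑(Finset.range k)) = ({pt i, -pt i} : Set E3) := by
  ext x
  constructor
  · rintro ⟨⟨hspan, -⟩, hpat⟩
    rw [SetLike.mem_coe, Submodule.mem_span_pair] at hspan
    obtain ⟨a, b, hab⟩ := hspan
    have hx0 : x 0 = a * aa i + b * (-(5/4) * bb i) := by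
      simpa [pt, vv] using (congrArg (· 0) hab).symm
    have hx1 : x 1 = a * bb i + b * ((5/4) * aa i) := by
      simpa [pt, vv] using (congrArg (· 1) hab).symm
    have hx2 : x 2 = a * (3/5) := by
      simpa [pt, vv] using (congrArg (· 2) hab).symm
    have hxn : -(3/5) * aa i * x 0 - (3/5) * bb i * x 1 + (16/25) * x 2 = 0 := by
      rw [hx0, hx1, hx2]; linear_combination (-(3/5) * a) * hsq i
    rcases hpat with ⟨j, hj, rfl⟩ | ⟨y, ⟨j, hj, rfl⟩, rfl⟩
    · have hji : j = i := by
        by_contra hne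
        have hD := D_pos i j (fun h => hne h.symm)
        rw [pt0, pt1, pt2] at hxn
        nlinarith
      rw [hji]; exact mem_insert _ _
    · have hji : j = i := by
        by_contra hne
        have hD := D_pos i j (fun h => hne h.symm)
        replace hxn : -(3/5) * aa i * (-(aa j)) - (3/5) * bb i * (-(bb j))
            + (16/25) * (-(3/5)) = 0 := hxn
        nlinarith
      rw [hji]; exact mem_insert_of_mem _ rfl
  · rintro (rfl | hx)
    · refine ⟨⟨Submodule.subset_span (mem_insert _ _), norm_pt i⟩,
        Or.inl ⟨i, by simpa using hi, rfl⟩⟩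
    · rw [mem_singleton_iff] at hx
      subst hx
      refine ⟨⟨?_, ?_⟩, Or.inr ⟨pt i, ⟨i, by simpa using hi, rfl⟩, rfl⟩⟩
      · exact Submodule.neg_mem _ (Submodule.subset_span (mem_insert _ _))
      · show ‖-pt i‖ = 1
        rw [norm_neg]; exact norm_pt i

lemma disj (i j : ℕ) (hne : i ≠ j) :
    halfCircle (pt i) (vv (pt i)) ∩ halfCircle (pt j) (vv (pt j)) = ∅ := by
  ext x
  simp only [mem_inter_iff, mem_empty_iff_false, iff_false, not_and]
  rintro ⟨s, hs, hxs⟩ ⟨t, ht, hxt⟩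
  have hss : 0 ≤ Real.sin s := Real.sin_nonneg_of_nonneg_of_le_pi hs.1 hs.2
  have hst : 0 ≤ Real.sin t := Real.sin_nonneg_of_nonneg_of_le_pi ht.1 ht.2
  have ps : Real.sin s ^ 2 + Real.cos s ^ 2 = 1 := Real.sin_sq_add_cos_sq s
  have a0 : x 0 = Real.cos s * aa i + Real.sin s * (-(5/4) * bb i) := by
    rw [hxs]; rfl
  have a1 : x 1 = Real.cos s * bb i + Real.sin s * ((5/4) * aa i) := by
    rw [hxs]; rfl
  have a2 : x 2 = Real.cos s * (3/5) := by
    rw [hxs]; show Real.cos s * (3/5) + Real.sin s * 0 = _; ring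
  have b0 : x 0 = Real.cos t * aa j + Real.sin t * (-(5/4) * bb j) := by
    rw [hxt]; rfl
  have b1 : x 1 = Real.cos t * bb j + Real.sin t * ((5/4) * aa j) := by
    rw [hxt]; rfl
  have b2 : x 2 = Real.cos t * (3/5) := by
    rw [hxt]; show Real.cos t * (3/5) + Real.sin t * 0 = _; ring
  set A := aa i; set B := bb i; set A' := aa j; set B' := bb j
  have Ei : -(3/5) * A * x 0 - (3/5) * B * x 1 + (16/25) * x 2 = 0 := by
    rw [a0, a1, a2]; linear_combination (-(3/5) * Real.cos s) * hsq i
  have Ej : -(3/5) * A' * x 0 - (3/5) * B' * x 1 + (16/25) * x 2 = 0 := by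
    rw [b0, b1, b2]; linear_combination (-(3/5) * Real.cos t) * hsq j
  have Si : Real.sin s = -(5/4) * B * x 0 + (5/4) * A * x 1 := by
    rw [a0, a1]; linear_combination (-(25/16) * Real.sin s) * hsq i
  have Sj : Real.sin t = -(5/4) * B' * x 0 + (5/4) * A' * x 1 := by
    rw [b0, b1]; linear_combination (-(25/16) * Real.sin t) * hsq j
  have N : x 0 ^ 2 + x 1 ^ 2 + x 2 ^ 2 = 1 := by
    rw [a0, a1, a2]
    linear_combination (Real.cos s ^ 2 + (25/16) * Real.sin s ^ 2) * hsq i + ps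
  have G02 : x 0 * (A * B' - A' * B) = (16/15) * (B' - B) * x 2 := by
    linear_combination (-(5/3) * B') * Ei + ((5/3) * B) * Ej
  have G12 : x 1 * (A * B' - A' * B) = (16/15) * (A - A') * x 2 := by
    linear_combination ((5/3) * A') * Ei + (-(5/3) * A) * Ej
  set D : ℝ := 16/25 - (A * A' + B * B') with hDdef
  have H1 : Real.sin s * (A * B' - A' * B) = (4/3) * x 2 * D := by
    linear_combination (A * B' - A' * B) * Si + (-(5/4) * B) * G02 + ((5/4) * A) * G12
      + ((4/3) * x 2) * hsq i
  have H2 : Real.sin t * (A * B' - A' * B) = -((4/3) * x 2 * D) := by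
    linear_combination (A * B' - A' * B) * Sj + (-(5/4) * B') * G02 + ((5/4) * A') * G12
      + (-(4/3) * x 2) * hsq j
  have hM := M_ne i j hne
  have hD := D_pos i j hne
  have hprodeq : (Real.sin s * (A * B' - A' * B)) * (Real.sin t * (A * B' - A' * B))
      = -((4/3) * x 2 * D)^2 := by rw [H1, H2]; ring
  have hx2 : x 2 = 0 := by
    have key : (Real.sin s * Real.sin t) * (A * B' - A' * B)^2 = -((4/3) * x 2 * D)^2 := by
      linear_combination hprodeq
    have hge : (0:ℝ) ≤ (Real.sin s * Real.sin t) * (A * B' - A' * B)^2 :=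
      mul_nonneg (mul_nonneg hss hst) (sq_nonneg _)
    have hle : ((4/3) * x 2 * D)^2 ≤ 0 := by linarith
    have hE2 : ((4/3) * x 2 * D)^2 = 0 := le_antisymm hle (sq_nonneg _)
    have hprod0 : (4/3) * x 2 * D = 0 := pow_eq_zero_iff two_ne_zero |>.mp hE2
    rcases mul_eq_zero.mp hprod0 with h | h
    · rcases mul_eq_zero.mp h with h' | h'
      · norm_num at h'
      · exact h'
    · exact absurd h (ne_of_gt hD)
  have hx0 : x 0 = 0 := by
    rw [hx2] at G02
    simp only [mul_zero] at G02
    exact (mul_eq_zero.mp G02).resolve_right hM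
  have hx1 : x 1 = 0 := by
    rw [hx2] at G12
    simp only [mul_zero] at G12
    exact (mul_eq_zero.mp G12).resolve_right hM
  rw [hx0, hx1, hx2] at N
  norm_num at N

end SZAux


theorem exists_strength_zero_configuration (k : ℕ) (hk : 3 ≤ k) :
    ∃ (P : Set E3) (v : E3 → E3),
      P ⊆ unitSphere ∧ P.Finite ∧ P.ncard = k ∧ GenPos P ∧
      (∀ p ∈ P, ‖v p‖ = 1 ∧ ⟪p, v p⟫ = 0) ∧
      (∀ p ∈ P, ((Submodule.span ℝ {p, v p} : Set E3) ∩ unitSphere) ∩ phat P =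
        ({p, -p} : Set E3)) ∧
      (∀ p ∈ P, ∀ q ∈ P, p ≠ q → halfCircle p (v p) ∩ halfCircle q (v q) = ∅) := by
  classical
  refine ⟨SZAux.pt '' ↑(Finset.range k), SZAux.vv, ?_, ?_, ?_, ?_, ?_, ?_, ?_⟩
  · rintro p ⟨i, -, rfl⟩; exact SZAux.norm_pt i
  · exact (Finset.range k).finite_toSet.image _
  · rw [← Finset.coe_image, Set.ncard_coe_finset,
      Finset.card_image_of_injective _ SZAux.pt_inj, Finset.card_range]
  · rintro a ⟨i, -, rfl⟩ b ⟨j, -, rfl⟩ c ⟨l, -, rfl⟩ hab hac hbc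
    exact SZAux.pt_li i j l (fun h => hab (by rw [h])) (fun h => hac (by rw [h]))
      (fun h => hbc (by rw [h]))
  · rintro p ⟨i, -, rfl⟩
    exact ⟨SZAux.norm_vv i, SZAux.inner_pt_vv i⟩
  · rintro p ⟨i, hi, rfl⟩
    exact SZAux.span_eq k i (by simpa using hi)
  · rintro p ⟨i, -, rfl⟩ q ⟨j, -, rfl⟩ hpq
    exact SZAux.disj i j (fun h => hpq (by rw [h]))


end
end
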